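/- arXiv:1709.04357 — 4 statements merged into one kernel-verified Lean document; each statement's English description precedes it below -/
import Mathlib

section
/- Let 0<q<1, let k≥1 be an integer and let a>0 be real. For integers n≥0 set u_n := (k + a k^{−1})^n / n! · q^{−n(2k−n−1)/2}. Then u_j < u_{2k−1−j} for every integer j with 0 ≤ j ≤ k−1. -/
lemma aux_fact (k : ℕ) (hk : 1 ≤ k) : ∀ d, d ≤ k - 1 →
    (k + d).factorial ≤ (k - 1 - d).factorial * k ^ (2 * d + 1) := by
  intro d
  induction d with
  | zero =>
    intro _
    have h : k * (k - 1).factorial = k.factorial := Nat.mul_factorial_pred (by omega)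
    simp only [Nat.add_zero, Nat.sub_zero, Nat.mul_zero, Nat.zero_add, pow_one]
    exact le_of_eq (by rw [← h, Nat.mul_comm])
  | succ d ih =>
    intro hd
    have hih := ih (by omega)
    have h1 : (k + (d + 1)).factorial = (k + d + 1) * (k + d).factorial := by
      have : k + (d + 1) = (k + d) + 1 := by omega
      rw [this, Nat.factorial_succ]
    have h2 : (k - 1 - d).factorial = (k - 1 - d) * (k - 1 - (d + 1)).factorial := by
      have : k - 1 - d = (k - 1 - (d + 1)) + 1 := by omega
      rw [this, Nat.factorial_succ]
    have h3 : (k + d + 1) * (k - 1 - d) ≤ k * k := by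
      obtain ⟨e, he⟩ : ∃ e, k = e + d + 1 ∧ k - 1 - d = e := ⟨k - 1 - d, by omega, rfl⟩
      rw [he.2, he.1]
      nlinarith
    calc (k + (d + 1)).factorial = (k + d + 1) * (k + d).factorial := h1
      _ ≤ (k + d + 1) * ((k - 1 - d).factorial * k ^ (2 * d + 1)) :=
          Nat.mul_le_mul_left _ hih
      _ = ((k + d + 1) * (k - 1 - d)) * ((k - 1 - (d + 1)).factorial * k ^ (2 * d + 1)) := by
          rw [h2]; ring
      _ ≤ (k * k) * ((k - 1 - (d + 1)).factorial * k ^ (2 * d + 1)) :=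
          Nat.mul_le_mul_right _ h3
      _ = (k - 1 - (d + 1)).factorial * k ^ (2 * (d + 1) + 1) := by ring

theorem stmt5 (q : ℝ) (hq0 : 0 < q) (hq1 : q < 1) (k : ℕ) (hk : 1 ≤ k)
    (a : ℝ) (ha : 0 < a) (u : ℕ → ℝ)
    (hu : ∀ n : ℕ,
      u n = ((k : ℝ) + a / (k : ℝ)) ^ n / (n.factorial : ℝ) *
        (q ^ (n * (2 * k - n - 1) / 2))⁻¹) :
    ∀ j : ℕ, j ≤ k - 1 → u j < u (2 * k - 1 - j) := by
  intro j hj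
  set m := 2 * k - 1 - j with hm
  have hjm : j < m := by omega
  have hexp : m * (2 * k - m - 1) = j * (2 * k - j - 1) := by
    have h1 : 2 * k - m - 1 = j := by omega
    have h2 : 2 * k - j - 1 = m := by omega
    rw [h1, h2, Nat.mul_comm]
  rw [hu j, hu m, hexp]
  set c : ℝ := (k : ℝ) + a / (k : ℝ) with hc
  have hk0 : (0 : ℝ) < (k : ℝ) := by exact_mod_cast hk
  have hck : (k : ℝ) < c := lt_add_of_pos_right _ (div_pos ha hk0)
  have hc0 : (0 : ℝ) < c := lt_trans hk0 hck
  have hp : (0 : ℝ) < (q ^ (j * (2 * k - j - 1) / 2))⁻¹ := by positivity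
  apply mul_lt_mul_of_pos_right _ hp
  have hjf : (0 : ℝ) < (j.factorial : ℝ) := by exact_mod_cast j.factorial_pos
  have hmf : (0 : ℝ) < (m.factorial : ℝ) := by exact_mod_cast m.factorial_pos
  rw [div_lt_div_iff₀ hjf hmf]
  -- key factorial bound
  have hfacN : m.factorial ≤ j.factorial * k ^ (m - j) := by
    have hd : k - 1 - (k - 1 - j) = j := by omega
    have hmk : m = k + (k - 1 - j) := by omega
    have hmj : m - j = 2 * (k - 1 - j) + 1 := by omega
    rw [hmj, hmk]
    have := aux_fact k hk (k - 1 - j) (by omega)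
    rwa [hd] at this
  have hfac : (m.factorial : ℝ) ≤ (j.factorial : ℝ) * (k : ℝ) ^ (m - j) := by
    exact_mod_cast hfacN
  have hpow : (k : ℝ) ^ (m - j) < c ^ (m - j) :=
    pow_lt_pow_left₀ hck (le_of_lt hk0) (by omega)
  have hcm : c ^ m = c ^ j * c ^ (m - j) := by
    rw [← pow_add]
    congr 1
    omega
  calc c ^ j * (m.factorial : ℝ)
      ≤ c ^ j * ((j.factorial : ℝ) * (k : ℝ) ^ (m - j)) := by
        apply mul_le_mul_of_nonneg_left hfac (le_of_lt (pow_pos hc0 j))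
    _ < c ^ j * ((j.factorial : ℝ) * c ^ (m - j)) := by
        apply mul_lt_mul_of_pos_left _ (pow_pos hc0 j)
        exact mul_lt_mul_of_pos_left hpow hjf
    _ = c ^ m * (j.factorial : ℝ) := by rw [hcm]; ring
end

section
/- Let 0<q<1, let a_0>0 and C≥0 be real, and let a:ℕ→ℝ satisfy a(k)>0 and |a(k) − a_0| ≤ C/k for all integers k≥1. For integers k≥1 and n≥0 set u_n^{(k)} := (k + a(k) k^{−1})^n / n! · q^{−n(2k−n−1)/2}, and for 0 ≤ j ≤ k−1 set v_j^{(k)} := u_{2k−j−1}^{(k)} − u_j^{(k)}. Then there exists a positive integer N_0 (depending on q, a_0, C) such that for all integers N ≥ N_0 and all integers k ≥ q^{−3N}, one has v_j^{(k)} < v_{j+1}^{(k)} for all integers j with 0 ≤ j ≤ k−N. -/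
open Finset

lemma fact_prod_aux (m n : ℕ) (h : m ≤ n) :
    m.factorial * ∏ i ∈ Finset.Ico (m+1) (n+1), i = n.factorial := by
  rw [← Finset.prod_Ico_id_eq_factorial, ← Finset.prod_Ico_id_eq_factorial n,
    Finset.prod_Ico_consecutive _ (by omega : 1 ≤ m+1) (by omega : m+1 ≤ n+1)]

lemma prod_Ico_bound : ∀ c : ℕ, 1 ≤ c → ∀ k : ℕ, c + 1 ≤ k →
    (∏ i ∈ Finset.Ico (k - c) (k + c + 1), (i : ℝ)) ≤
      (k : ℝ) ^ (2*c - 1) * ((k : ℝ) ^ 2 - (c : ℝ) ^ 2) := by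
  intro c hc
  induction c, hc using Nat.le_induction with
  | base =>
    intro k hk
    have : Finset.Ico (k-1) (k+1+1) = {k-1, k, k+1} := by
      ext i; simp only [Finset.mem_Ico, Finset.mem_insert, Finset.mem_singleton]; omega
    rw [this]
    rw [Finset.prod_insert (by simp only [Finset.mem_insert, Finset.mem_singleton]; omega),
      Finset.prod_insert (by simp only [Finset.mem_singleton]; omega),
      Finset.prod_singleton]
    have hk1 : ((k-1 : ℕ) : ℝ) = (k:ℝ) - 1 := by
      rw [Nat.cast_sub (by omega : 1 ≤ k)]; norm_num
    rw [hk1]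
    push_cast
    ring_nf
    nlinarith [sq_nonneg ((k:ℝ))]
  | succ c hc ih =>
    intro k hk
    have hck : c + 1 ≤ k := by omega
    have ihk := ih k hck
    have hsplit : Finset.Ico (k - (c+1)) (k + (c+1) + 1)
        = insert (k - (c+1)) (insert (k + c + 1) (Finset.Ico (k - c) (k + c + 1))) := by
      ext i
      simp only [Finset.mem_Ico, Finset.mem_insert]
      omega
    rw [hsplit,
      Finset.prod_insert (by simp only [Finset.mem_insert, Finset.mem_Ico]; omega),
      Finset.prod_insert (by simp only [Finset.mem_Ico]; omega)]
    have hc1 : ((k - (c+1) : ℕ) : ℝ) = (k:ℝ) - ((c:ℝ)+1) := by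
      rw [Nat.cast_sub (by omega : c+1 ≤ k)]; push_cast; ring
    rw [hc1]
    have hprodnn : (0:ℝ) ≤ ∏ i ∈ Finset.Ico (k - c) (k + c + 1), (i : ℝ) :=
      Finset.prod_nonneg (fun i _ => by positivity)
    have hkR : ((c:ℝ) + 2) ≤ (k:ℝ) := by
      have : ((c+2 : ℕ) : ℝ) ≤ (k:ℝ) := Nat.cast_le.mpr (by omega)
      push_cast at this; linarith
    have hcnn : (0:ℝ) ≤ (c:ℝ) := Nat.cast_nonneg c
    have hpow : (k:ℝ)^(2*(c+1)-1) = (k:ℝ)^(2*c-1) * (k:ℝ)^2 := by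
      rw [← pow_add]; congr 1; omega
    push_cast
    have hknn : (0:ℝ) ≤ (k:ℝ)^(2*c-1) := by positivity
    have step1 : ((k:ℝ) - ((c:ℝ)+1)) * (((k:ℝ) + (c:ℝ) + 1) * ∏ i ∈ Finset.Ico (k - c) (k + c + 1), (i : ℝ))
        ≤ ((k:ℝ) - ((c:ℝ)+1)) * (((k:ℝ) + (c:ℝ) + 1) * ((k : ℝ) ^ (2*c - 1) * ((k : ℝ) ^ 2 - (c : ℝ) ^ 2))) := by
      apply mul_le_mul_of_nonneg_left (mul_le_mul_of_nonneg_left ihk (by nlinarith)) (by nlinarith)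
    refine le_trans step1 ?_
    rw [hpow]
    have hA : (0:ℝ) ≤ (k:ℝ)^2 - ((c:ℝ)+1)^2 := by nlinarith
    have h' : (k:ℝ)^(2*c-1)*((k:ℝ)^2-(c:ℝ)^2) ≤ (k:ℝ)^(2*c-1)*(k:ℝ)^2 := by
      nlinarith [mul_nonneg hknn (sq_nonneg (c:ℝ))]
    nlinarith [mul_le_mul_of_nonneg_left h' hA]

lemma exp_half (j c : ℕ) : (j+1)*(j+2*c+2)/2 = j*(j+2*c+3)/2 + (c+1) := by
  obtain ⟨t, ht⟩ := Nat.even_mul_succ_self j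
  have e1 : j*(j+2*c+3) = (t+t) + 2*(j*(c+1)) := by rw [← ht]; ring
  have e2 : (j+1)*(j+2*c+2) = (t+t) + 2*(j*(c+1)) + 2*(c+1) := by rw [← ht]; ring
  rw [e1, e2]
  generalize j*(c+1) = u
  omega

set_option maxHeartbeats 1000000 in
theorem stmt6 (q : ℝ) (hq0 : 0 < q) (hq1 : q < 1) (a0 C : ℝ) (ha0 : 0 < a0) (hC : 0 ≤ C)
    (a : ℕ → ℝ) (hapos : ∀ k : ℕ, 1 ≤ k → 0 < a k)
    (haC : ∀ k : ℕ, 1 ≤ k → |a k - a0| ≤ C / (k : ℝ))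
    (u : ℕ → ℕ → ℝ)
    (hu : ∀ k n : ℕ,
      u k n = ((k : ℝ) + a k / (k : ℝ)) ^ n / (n.factorial : ℝ) *
        (q ^ (n * (2 * k - n - 1) / 2))⁻¹)
    (v : ℕ → ℕ → ℝ) (hv : ∀ k j : ℕ, v k j = u k (2 * k - j - 1) - u k j) :
    ∃ N0 : ℕ, 0 < N0 ∧ ∀ N : ℕ, N0 ≤ N → ∀ k : ℕ, (q⁻¹) ^ (3 * N) ≤ (k : ℝ) →
      ∀ j : ℕ, j ≤ k - N → v k j < v k (j + 1) := by
  have hqi : 1 < q⁻¹ := (one_lt_inv₀ hq0).mpr hq1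
  set s : ℝ := q⁻¹ - 1 with hs_def
  have hs0 : 0 < s := by simp only [hs_def]; linarith
  have hqs : 1 + s = q⁻¹ := by simp only [hs_def]; ring
  set K0 : ℝ := a0 + C with hK0_def
  set K1 : ℝ := 2*K0 + K0^2 with hK1_def
  have hK0pos : 0 < K0 := by simp only [hK0_def]; linarith
  have hK1nn : 0 ≤ K1 := by simp only [hK1_def, hK0_def]; nlinarith
  set T : ℝ := max (7 + K1) (max (K0 + 4) (1/s)) with hT_def
  have hT1 : 7 + K1 ≤ T := le_max_left _ _
  have hT2 : K0 + 4 ≤ T := le_trans (le_max_left _ _) (le_max_right _ _)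
  have hT3 : 1/s ≤ T := le_trans (le_max_right _ _) (le_max_right _ _)
  clear_value s K0 K1 T
  clear hT_def hs_def
  obtain ⟨M, hM⟩ := pow_unbounded_of_one_lt T hqi
  refine ⟨M + 4, by omega, ?_⟩
  intro N hN k hk j hj
  have hTpos : 0 < T := lt_of_lt_of_le (by linarith only [hK1nn]) hT1
  -- lower bound on k
  have hqiN : (1:ℝ) + N * s ≤ q⁻¹ ^ N := by
    have h := one_add_mul_le_pow (by linarith : (-2:ℝ) ≤ s) N
    rwa [hqs] at h
  have hpowM : q⁻¹ ^ M ≤ q⁻¹ ^ (2*N) := pow_le_pow_right₀ (le_of_lt hqi) (by omega)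
  have hsplit3 : q⁻¹ ^ (3*N) = q⁻¹^(2*N) * q⁻¹^N := by rw [← pow_add]; congr 1; omega
  have hNnn : (0:ℝ) ≤ (N:ℝ) := Nat.cast_nonneg N
  have hkbig : (N:ℝ) + K0 + 4 ≤ (k:ℝ) := by
    have h1 : T * (1 + N*s) ≤ q⁻¹^(2*N) * q⁻¹^N := by
      apply mul_le_mul (le_trans hM.le hpowM) hqiN (by nlinarith only [mul_nonneg hNnn hs0.le]) (by positivity)
    have h2 : (N:ℝ) ≤ T*(N*s) := by
      have h3 := mul_le_mul_of_nonneg_right hT3 (mul_nonneg hNnn hs0.le)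
      have h4 : 1/s * ((N:ℝ)*s) = (N:ℝ) := by field_simp
      rw [h4] at h3; exact h3
    rw [hsplit3] at hk
    calc (N:ℝ) + K0 + 4 ≤ T + T*((N:ℝ)*s) := by linarith only [hT2, h2]
      _ = T*(1+(N:ℝ)*s) := by ring
      _ ≤ q⁻¹^(2*N) * q⁻¹^N := h1
      _ ≤ (k:ℝ) := hk
  have hkN : N + 4 ≤ k := by
    have : ((N+4:ℕ):ℝ) ≤ (k:ℝ) := by push_cast; linarith only [hkbig, hK0pos]
    exact_mod_cast this
  have hN4 : 4 ≤ N := by omega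
  have hjN : j + N ≤ k := by omega
  set c := k - j - 2 with hc_def
  have hkc : k = j + c + 2 := by omega
  have hcN : N ≤ c + 2 := by omega
  have hc2 : 2 ≤ c := by omega
  have hk1 : 1 ≤ k := by omega
  have hk0R : (0:ℝ) < (k:ℝ) := by exact_mod_cast Nat.pos_of_ne_zero (by omega)
  have hkne : (k:ℝ) ≠ 0 := ne_of_gt hk0R
  have hkR : (k:ℝ) = (j:ℝ) + (c:ℝ) + 2 := by exact_mod_cast hkc
  have hcnn : (0:ℝ) ≤ (c:ℝ) := Nat.cast_nonneg c
  have hjnn : (0:ℝ) ≤ (j:ℝ) := Nat.cast_nonneg j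
  -- a bounds
  have hak := hapos k hk1
  have habs := haC k hk1
  have hk1R : (1:ℝ) ≤ (k:ℝ) := by exact_mod_cast hk1
  have haub : a k ≤ K0 := by
    have h1 : C/(k:ℝ) ≤ C := div_le_self hC hk1R
    have h2 := (abs_le.mp habs).2
    linarith only [h1, h2, hK0_def]
  have hkK0 : K0 ≤ (k:ℝ) := by linarith only [hkbig, hNnn]
  -- exponent bookkeeping
  have h2kj : 2*k - j - 1 = j + 2*c + 3 := by omega
  have h2kj2 : 2*k - (j+1) - 1 = j + 2*c + 2 := by omega
  have hee1 : 2*k - (j+2*c+3) - 1 = j := by omega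
  have hee2 : 2*k - (j+2*c+2) - 1 = j + 1 := by omega
  have hex1 : (j+2*c+3) * (2*k - (j+2*c+3) - 1) / 2 = j*(j+2*c+3)/2 := by
    rw [hee1, Nat.mul_comm]
  have hex2 : j * (2*k - j - 1) / 2 = j*(j+2*c+3)/2 := by rw [h2kj]
  have hex3 : (j+2*c+2) * (2*k - (j+2*c+2) - 1) / 2 = j*(j+2*c+3)/2 + (c+1) := by
    rw [hee2, Nat.mul_comm]; exact exp_half j c
  have hex4 : (j+1) * (2*k - (j+1) - 1) / 2 = j*(j+2*c+3)/2 + (c+1) := by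
    rw [h2kj2]; exact exp_half j c
  rw [hv k j, hv k (j+1), h2kj, h2kj2, hu k (j+2*c+3), hu k j, hu k (j+2*c+2),
    hu k (j+1), hex1, hex2, hex3, hex4]
  rw [pow_add q (j*(j+2*c+3)/2) (c+1)]
  clear hu hv hj hk hqiN hpowM hsplit3 hex1 hex2 hex3 hex4 hee1 hee2 h2kj h2kj2
  clear hapos haC habs hT2 hT3 hTpos hqs
  -- abbreviations
  set A : ℝ := (k:ℝ) + a k / (k:ℝ) with hA_def
  have hAk : (k:ℝ) ≤ A := le_add_of_nonneg_right (by positivity)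
  have hApos : 0 < A := lt_of_lt_of_le hk0R hAk
  have hAne : A ≠ 0 := ne_of_gt hApos
  have hAub : A ≤ (k:ℝ) + K0 := by
    have h6 : a k / (k:ℝ) ≤ a k := div_le_self hak.le hk1R
    rw [hA_def]; linarith
  have hA2k : A ≤ 2*(k:ℝ) := by linarith only [hAub, hkK0]
  set e := j*(j+2*c+3)/2 with he_def
  set x : ℝ := A ^ (j+2*c+2) / (((j+2*c+2).factorial : ℕ) : ℝ) with hx_def
  set y : ℝ := A ^ (j+1) / (((j+1).factorial : ℕ) : ℝ) with hy_def
  set Q : ℝ := (q^(c+1))⁻¹ with hQ_def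
  clear_value A e x y Q
  have hxpos : 0 < x := by
    rw [hx_def]
    exact div_pos (pow_pos hApos _) (by exact_mod_cast Nat.cast_pos.mpr (Nat.factorial_pos _))
  have hypos : 0 < y := by
    rw [hy_def]
    exact div_pos (pow_pos hApos _) (by exact_mod_cast Nat.cast_pos.mpr (Nat.factorial_pos _))
  suffices h : A ^ (j+2*c+3) / (((j+2*c+3).factorial : ℕ) : ℝ) - A ^ j / ((j.factorial : ℕ) : ℝ)
      < Q * (x - y) by
    have hqe : (0:ℝ) < (q ^ e)⁻¹ := inv_pos.mpr (pow_pos hq0 e)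
    have h2 := mul_lt_mul_of_pos_right h hqe
    rw [mul_inv, ← hQ_def]
    calc A ^ (j+2*c+3) / (((j+2*c+3).factorial : ℕ) : ℝ) * (q^e)⁻¹
          - A ^ j / ((j.factorial : ℕ) : ℝ) * (q^e)⁻¹
        = (A ^ (j+2*c+3) / (((j+2*c+3).factorial : ℕ) : ℝ)
            - A ^ j / ((j.factorial : ℕ) : ℝ)) * (q^e)⁻¹ := by ring
      _ < Q*(x-y) * (q^e)⁻¹ := h2
      _ = x * ((q^e)⁻¹ * Q) - y * ((q^e)⁻¹ * Q) := by ring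
  -- rewrite the extreme terms
  have hX1 : A ^ (j+2*c+3) / (((j+2*c+3).factorial : ℕ) : ℝ)
      = x * (A / ((j:ℝ)+2*(c:ℝ)+3)) := by
    have h3 : (j+2*c+3).factorial = (j+2*c+3) * (j+2*c+2).factorial := by
      rw [show j+2*c+3 = (j+2*c+2)+1 from by omega, Nat.factorial_succ]
    have h4 : A ^ (j+2*c+3) = A^(j+2*c+2) * A := by
      rw [show j+2*c+3 = (j+2*c+2)+1 from by omega, pow_succ]
    have hdne : ((j:ℝ)+2*(c:ℝ)+3) ≠ 0 := by positivity
    have hfne : (((j+2*c+2).factorial : ℕ):ℝ) ≠ 0 :=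
      Nat.cast_ne_zero.mpr (Nat.factorial_ne_zero _)
    rw [h3, h4, hx_def]
    push_cast
    field_simp
  have hY1 : A ^ j / ((j.factorial : ℕ) : ℝ) = y * (((j:ℝ)+1)/A) := by
    have h5 : (j+1).factorial = (j+1)*j.factorial := Nat.factorial_succ j
    have hfne : ((j.factorial : ℕ):ℝ) ≠ 0 := Nat.cast_ne_zero.mpr (Nat.factorial_ne_zero _)
    have hj1ne : ((j:ℝ)+1) ≠ 0 := by positivity
    rw [hy_def, h5, pow_succ]
    push_cast
    field_simp
  rw [hX1, hY1]
  -- key quantities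
  have hd1pos : (0:ℝ) < (j:ℝ)+2*(c:ℝ)+3 := by positivity
  have hQeq : Q = (q⁻¹)^(c+1) := by rw [hQ_def, inv_pow]
  have hQge : 7 + K1 ≤ Q := by
    have hMc : M ≤ c+1 := by omega
    have h7 := pow_le_pow_right₀ (le_of_lt hqi) hMc
    rw [hQeq]; linarith only [hM, h7, hT1]
  have hQpos : 0 < Q := by linarith only [hQge, hK1nn]
  have hα2 : A/((j:ℝ)+2*(c:ℝ)+3) ≤ 2 := by
    rw [div_le_iff₀ hd1pos]; linarith only [hA2k, hkR, hcnn, hjnn]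
  have hαpos : 0 < A/((j:ℝ)+2*(c:ℝ)+3) := div_pos hApos hd1pos
  have hβpos : 0 < ((j:ℝ)+1)/A := div_pos (by positivity) hApos
  -- alpha - beta bound
  have hc2R : (2:ℝ) ≤ (c:ℝ) := by exact_mod_cast hc2
  have hαβ : A/((j:ℝ)+2*(c:ℝ)+3) - ((j:ℝ)+1)/A ≤ (K1 + ((c:ℝ)+1)^2)/(k:ℝ)^2 := by
    have hsub : A/((j:ℝ)+2*(c:ℝ)+3) - ((j:ℝ)+1)/A
        = (A*A - ((j:ℝ)+2*(c:ℝ)+3)*((j:ℝ)+1)) / (((j:ℝ)+2*(c:ℝ)+3)*A) :=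
      div_sub_div _ _ (ne_of_gt hd1pos) hAne
    have hjR : (j:ℝ) = (k:ℝ) - (c:ℝ) - 2 := by linarith only [hkR]
    have hnum_eq : A*A - ((j:ℝ)+2*(c:ℝ)+3)*((j:ℝ)+1)
        = 2*(a k) + (a k)^2/(k:ℝ)^2 + ((c:ℝ)+1)^2 := by
      rw [hA_def, hjR]; field_simp; ring
    rw [hsub, hnum_eq]
    have hnumle : 2*(a k) + (a k)^2/(k:ℝ)^2 + ((c:ℝ)+1)^2 ≤ K1 + ((c:ℝ)+1)^2 := by
      have ha2 : (a k)^2/(k:ℝ)^2 ≤ (a k)^2 := by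
        apply div_le_self (sq_nonneg _)
        nlinarith only [hk1R]
      have ha3 : (a k)^2 ≤ K0^2 := by nlinarith only [hak, haub]
      rw [hK1_def]; linarith only [ha2, ha3, haub, hak]
    have hdenge : (k:ℝ)^2 ≤ ((j:ℝ)+2*(c:ℝ)+3)*A := by
      have h8 : (k:ℝ) ≤ (j:ℝ)+2*(c:ℝ)+3 := by linarith only [hkR, hcnn, hjnn]
      nlinarith only [hAk, hk0R, h8]
    refine div_le_div₀ ?_ hnumle (pow_pos hk0R 2) hdenge
    have : (0:ℝ) ≤ ((c:ℝ)+1)^2 := sq_nonneg _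
    linarith only [this, hK1nn]
  -- x vs y
  have hxy : (1 + (c:ℝ)^2/(k:ℝ)^2) * y ≤ x := by
    have hfle : j+1 ≤ j+2*c+2 := by omega
    have hfact := fact_prod_aux (j+1) (j+2*c+2) hfle
    set P : ℝ := ∏ i ∈ Finset.Ico (j+1+1) (j+2*c+2+1), (i:ℝ) with hP_def
    have hfactR : (((j+1).factorial : ℕ):ℝ) * P = (((j+2*c+2).factorial : ℕ):ℝ) := by
      rw [hP_def, ← Nat.cast_prod, ← Nat.cast_mul, hfact]
    have hPpos : 0 < P := by
      rw [hP_def]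
      apply Finset.prod_pos
      intro i hi
      have h9 := (Finset.mem_Ico.mp hi).1
      have h10 : 0 < i := by omega
      exact_mod_cast h10
    have hintvl : Finset.Ico (j+1+1) (j+2*c+2+1) = Finset.Ico (k-c) (k+c+1) := by
      congr 1 <;> omega
    have hPle : P ≤ (k:ℝ)^(2*c-1)*((k:ℝ)^2 - (c:ℝ)^2) := by
      rw [hP_def, hintvl]; exact prod_Ico_bound c (by omega) k (by omega)
    clear_value P
    have hxP : x * P = y * A^(2*c+1) := by
      have hpowsplit : A ^ (j+2*c+2) = A^(j+1) * A^(2*c+1) := by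
        rw [← pow_add]; congr 1; omega
      have hf1ne : (((j+1).factorial : ℕ):ℝ) ≠ 0 := Nat.cast_ne_zero.mpr (Nat.factorial_ne_zero _)
      have hf2ne : (((j+2*c+2).factorial : ℕ):ℝ) ≠ 0 := Nat.cast_ne_zero.mpr (Nat.factorial_ne_zero _)
      have hPne : P ≠ 0 := ne_of_gt hPpos
      rw [hx_def, hy_def, hpowsplit, ← hfactR]
      field_simp
    have hAk21 : (k:ℝ)^(2*c+1) ≤ A^(2*c+1) := pow_le_pow_left₀ (Nat.cast_nonneg k) hAk _
    have hkey : (1 + (c:ℝ)^2/(k:ℝ)^2) * ((k:ℝ)^(2*c-1)*((k:ℝ)^2-(c:ℝ)^2)) ≤ (k:ℝ)^(2*c+1) := by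
      have h21 : (k:ℝ)^(2*c+1) = (k:ℝ)^(2*c-1)*(k:ℝ)^2 := by
        rw [← pow_add]; congr 1; omega
      have h1 : (1 + (c:ℝ)^2/(k:ℝ)^2)*((k:ℝ)^2 - (c:ℝ)^2) ≤ (k:ℝ)^2 := by
        have he2 : (1 + (c:ℝ)^2/(k:ℝ)^2) = ((k:ℝ)^2+(c:ℝ)^2)/(k:ℝ)^2 := by field_simp
        rw [he2, div_mul_eq_mul_div, div_le_iff₀ (pow_pos hk0R 2)]
        nlinarith only [sq_nonneg ((c:ℝ)^2)]
      calc (1 + (c:ℝ)^2/(k:ℝ)^2) * ((k:ℝ)^(2*c-1)*((k:ℝ)^2-(c:ℝ)^2))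
          = (k:ℝ)^(2*c-1) * ((1 + (c:ℝ)^2/(k:ℝ)^2)*((k:ℝ)^2-(c:ℝ)^2)) := by ring
        _ ≤ (k:ℝ)^(2*c-1) * (k:ℝ)^2 := mul_le_mul_of_nonneg_left h1 (by positivity)
        _ = (k:ℝ)^(2*c+1) := h21.symm
    have hstep : (1 + (c:ℝ)^2/(k:ℝ)^2) * y * P ≤ x * P := by
      rw [hxP]
      have hPbound : (1 + (c:ℝ)^2/(k:ℝ)^2) * P ≤ A^(2*c+1) := by
        calc (1 + (c:ℝ)^2/(k:ℝ)^2) * P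
            ≤ (1 + (c:ℝ)^2/(k:ℝ)^2) * ((k:ℝ)^(2*c-1)*((k:ℝ)^2 - (c:ℝ)^2)) :=
              mul_le_mul_of_nonneg_left hPle (by positivity)
          _ ≤ (k:ℝ)^(2*c+1) := hkey
          _ ≤ A^(2*c+1) := hAk21
      calc (1 + (c:ℝ)^2/(k:ℝ)^2) * y * P = y * ((1 + (c:ℝ)^2/(k:ℝ)^2) * P) := by ring
        _ ≤ y * A^(2*c+1) := mul_le_mul_of_nonneg_left hPbound hypos.le
    exact le_of_mul_le_mul_right hstep hPpos
  -- final combination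
  have hQα : 5 + K1 ≤ Q - A/((j:ℝ)+2*(c:ℝ)+3) := by linarith only [hQge, hα2]
  have hQαpos : 0 < Q - A/((j:ℝ)+2*(c:ℝ)+3) := by linarith only [hQα, hK1nn]
  have hcombo : (Q - ((j:ℝ)+1)/A) * y < (Q - A/((j:ℝ)+2*(c:ℝ)+3)) * x := by
    have hlt : Q - ((j:ℝ)+1)/A
        < (Q - A/((j:ℝ)+2*(c:ℝ)+3)) * (1 + (c:ℝ)^2/(k:ℝ)^2) := by
      have hck2 : (K1 + ((c:ℝ)+1)^2) < (Q - A/((j:ℝ)+2*(c:ℝ)+3)) * (c:ℝ)^2 := by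
        have hm := mul_le_mul_of_nonneg_right hQα (sq_nonneg (c:ℝ))
        nlinarith only [hm, mul_nonneg hK1nn (by nlinarith only [hc2R] : (0:ℝ) ≤ (c:ℝ)^2 - 1),
          sq_nonneg ((c:ℝ)-2), hc2R, hK1nn]
      have hdiv : (K1 + ((c:ℝ)+1)^2)/(k:ℝ)^2
          < ((Q - A/((j:ℝ)+2*(c:ℝ)+3)) * (c:ℝ)^2)/(k:ℝ)^2 :=
        div_lt_div_of_pos_right hck2 (pow_pos hk0R 2)
      have hexp : (Q - A/((j:ℝ)+2*(c:ℝ)+3)) * (1 + (c:ℝ)^2/(k:ℝ)^2)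
          = (Q - A/((j:ℝ)+2*(c:ℝ)+3)) + ((Q - A/((j:ℝ)+2*(c:ℝ)+3)) * (c:ℝ)^2)/(k:ℝ)^2 := by
        ring
      linarith only [hαβ, hdiv, hexp]
    calc (Q - ((j:ℝ)+1)/A) * y
        < ((Q - A/((j:ℝ)+2*(c:ℝ)+3)) * (1 + (c:ℝ)^2/(k:ℝ)^2)) * y :=
          mul_lt_mul_of_pos_right hlt hypos
      _ = (Q - A/((j:ℝ)+2*(c:ℝ)+3)) * ((1 + (c:ℝ)^2/(k:ℝ)^2) * y) := by ring
      _ ≤ (Q - A/((j:ℝ)+2*(c:ℝ)+3)) * x := mul_le_mul_of_nonneg_left hxy hQαpos.le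
  have hfin : x * (A/((j:ℝ)+2*(c:ℝ)+3)) - y * (((j:ℝ)+1)/A) - Q * (x-y)
      = (Q - ((j:ℝ)+1)/A) * y - (Q - A/((j:ℝ)+2*(c:ℝ)+3)) * x := by ring
  linarith only [hcombo, hfin]
end

section
/- Fix an integer n≥1. There exist polynomials S_0, S_1, …, S_n in the variables y_0, …, y_{n−2} with rational coefficients (independent of j and of the sequence (a_i)) with the following property: for every integer j≥1 and every sequence (a_i)_{i≥0} of real numbers, letting a(x) := Σ_{i=0}^∞ a_i x^i ∈ ℝ[[x]], G(x) := (1 + a(x)x²)^j · Π_{i=0}^{j−1} (1 + i x)^{−1} ∈ ℝ[[x]], and H(x) := (Π_{i=1}^{j−1} (1 − i x)) · (1 + a(x)x²)^{−(j−1)} ∈ ℝ[[x]], the power series G − H is divisible by x², and the coefficient of x^{n−1} in ((G(x) − H(x))/x²)·(1 + a(x)x²) equals (2j−1)·( a_{n−1} + Σ_{i=0}^{n} S_i(a_0, …, a_{n−2}) (j(j−1))^i ). In particular, for n=1 one may take S_0 = 0 and S_1 = 1/6. -/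
/-- `G(x) = (1 + a(x)x²)^j · Π_{i=0}^{j-1} (1 + i x)⁻¹` in `ℝ⟦x⟧`,
where `a(x) = Σ a_i x^i`. -/
noncomputable def Gser (j : ℕ) (a : ℕ → ℝ) : PowerSeries ℝ :=
  (1 + PowerSeries.mk a * PowerSeries.X ^ 2) ^ j *
    ∏ i ∈ Finset.range j, (1 + PowerSeries.C (i : ℝ) * PowerSeries.X)⁻¹

/-- `H(x) = (Π_{i=1}^{j-1} (1 - i x)) · ((1 + a(x)x²)^{j-1})⁻¹` in `ℝ⟦x⟧`. -/
noncomputable def Hser (j : ℕ) (a : ℕ → ℝ) : PowerSeries ℝ :=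
  (∏ i ∈ Finset.Icc 1 (j - 1), (1 - PowerSeries.C (i : ℝ) * PowerSeries.X)) *
    ((1 + PowerSeries.mk a * PowerSeries.X ^ 2) ^ (j - 1))⁻¹

open Polynomial Finset

lemma smul_cancel_aux {R : Type*} [CommRing R] [Algebra ℚ R] (d : ℕ) (r : R) :
    (((d:ℚ)+1)⁻¹ • r) * ((d+1 : ℕ) : R) = r := by
  have h1 : ((d+1 : ℕ) : R) = ((d:ℚ)+1) • (1 : R) := by
    rw [Algebra.smul_def, mul_one]
    push_cast
    ring
  rw [h1, smul_mul_smul_comm, mul_one, inv_mul_cancel₀ (by positivity)]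
  simp

lemma discrete_antideriv_aux {R : Type*} [CommRing R] [Algebra ℚ R] :
    ∀ d : ℕ, ∀ q : Polynomial R, q.natDegree ≤ d →
      ∃ p : Polynomial R, p.natDegree ≤ d + 1 ∧ p.eval 0 = 0 ∧
        ∀ x : R, p.eval (x + 1) = p.eval x + q.eval x := by
  intro d
  induction d with
  | zero =>
    intro q hq
    have hqc := Polynomial.eq_C_of_natDegree_le_zero hq
    refine ⟨C (q.coeff 0) * X, ?_, by simp, by intro x; rw [hqc]; simp; ring⟩
    refine le_trans (natDegree_mul_le) ?_
    simp [natDegree_X_le]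
  | succ d IH =>
    intro q hq
    set c : R := ((d:ℚ)+2)⁻¹ • q.coeff (d+1) with hc
    set h : Polynomial R := C c * X^(d+2) with hh
    set Δh : Polynomial R := h.comp (X + 1) - h with hΔ
    have hΔcoeff : ∀ m, Δh.coeff m = c * ((d+2).choose m : R) - c * (X^(d+2) : Polynomial R).coeff m := by
      intro m
      rw [hΔ, hh, coeff_sub, mul_comp, C_comp, pow_comp, X_comp, coeff_C_mul,
        coeff_X_add_one_pow, coeff_C_mul]
    have hq' : (q - Δh).natDegree ≤ d := by
      rw [natDegree_le_iff_coeff_eq_zero]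
      intro m hm
      rw [coeff_sub, hΔcoeff]
      rcases lt_trichotomy m (d+2) with hlt | rfl | hgt
      · have hm1 : m = d + 1 := by omega
        subst hm1
        have key : c * (((d+2:ℕ)) : R) = q.coeff (d+1) := by
          have h1 : ((d+2:ℕ) : R) = algebraMap ℚ R ((d:ℚ)+2) := by
            rw [map_add, map_natCast, map_ofNat]; push_cast; ring
          rw [hc, h1, Algebra.smul_def, mul_comm (algebraMap ℚ R _) _, mul_assoc, ← map_mul,
            inv_mul_cancel₀ (by positivity), map_one, mul_one]
        rw [coeff_X_pow, if_neg (by omega), Nat.choose_succ_self_right]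
        push_cast at key ⊢
        linear_combination -key
      · rw [Nat.choose_self, coeff_X_pow, if_pos rfl]
        have : q.coeff (d+2) = 0 := coeff_eq_zero_of_natDegree_lt (by omega)
        rw [this]; push_cast; ring
      · rw [Nat.choose_eq_zero_of_lt hgt, coeff_X_pow, if_neg (by omega)]
        have : q.coeff m = 0 := coeff_eq_zero_of_natDegree_lt (by omega)
        rw [this]; push_cast; ring
    obtain ⟨p', hp'deg, hp'0, hp'step⟩ := IH (q - Δh) hq'
    refine ⟨h + p', ?_, ?_, ?_⟩
    · refine le_trans (natDegree_add_le _ _) (max_le ?_ (by omega))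
      rw [hh]
      refine le_trans ((natDegree_C_mul_le _ _).trans (natDegree_X_pow_le _)) (by omega)
    · rw [eval_add, hp'0, hh]; simp
    · intro x
      have hΔeval : Δh.eval x = h.eval (x+1) - h.eval x := by
        rw [hΔ, eval_sub, eval_comp, eval_add, eval_X, eval_one]
      have := hp'step x
      rw [eval_sub] at this
      rw [eval_add, eval_add, this]
      rw [hΔeval]
      ring

lemma discrete_antideriv {R : Type*} [CommRing R] [Algebra ℚ R] (q : Polynomial R) :
    ∃ p : Polynomial R, p.natDegree ≤ q.natDegree + 1 ∧ p.eval 0 = 0 ∧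
      ∀ x : R, p.eval (x + 1) = p.eval x + q.eval x :=
  discrete_antideriv_aux q.natDegree q le_rfl



lemma coeff_comp_neg_X {R : Type*} [CommRing R] (p : Polynomial R) (k : ℕ) :
    (p.comp (-X)).coeff k = (-1)^k * p.coeff k := by
  induction p using Polynomial.induction_on' with
  | add f g hf hg => rw [add_comp, coeff_add, hf, hg, coeff_add]; ring
  | monomial n a =>
    rw [← C_mul_X_pow_eq_monomial, mul_comp, C_comp, pow_comp, X_comp, neg_pow]
    have h1 : ((-1 : Polynomial R)^n) = C ((-1:R)^n) := by
      rw [map_pow, map_neg, map_one]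
    rw [h1, show C a * (C ((-1:R)^n) * X^n) = C (a * (-1)^n) * X^n by rw [map_mul]; ring,
      coeff_C_mul, coeff_C_mul, coeff_X_pow]
    rcases eq_or_ne n k with rfl | hne
    · simp [mul_comm]
    · simp [Ne.symm hne, hne]

lemma eq_zero_of_self_eq_neg {R : Type*} [AddCommGroup R] [Module ℚ R] {c : R} (h : c = -c) :
    c = 0 := by
  have h2 : (2 : ℚ) • c = 0 := by rw [two_smul]; nth_rewrite 2 [h]; abel
  have := congrArg (fun z => ((1:ℚ)/2) • z) h2
  simpa [smul_smul] using this

lemma antisym_poly_form {R : Type*} [CommRing R] [Algebra ℚ R] [Nontrivial R] (N : ℕ)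
    (Q : Polynomial R)
    (hQ : Q.comp (1 - X) = -Q) (hd : Q.natDegree ≤ 2*N + 2) :
    ∃ r : Polynomial R, r.natDegree ≤ N ∧ Q = (2 * X - 1) * (r.comp (X^2 - X)) := by
  obtain ⟨h2, hh2⟩ : ∃ x : R, x = algebraMap ℚ R (1/2) := ⟨_, rfl⟩
  obtain ⟨h4, hh4⟩ : ∃ x : R, x = algebraMap ℚ R (1/4) := ⟨_, rfl⟩
  have h2eq : (2 : Polynomial R) * C h2 = 1 := by
    have hx : (2:R) * h2 = 1 := by
      rw [hh2, show (2:R) = algebraMap ℚ R 2 from (map_ofNat _ 2).symm, ← map_mul]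
      norm_num
    rw [show (2 : Polynomial R) = C (2:R) from (map_ofNat C 2).symm, ← map_mul, hx, map_one]
  have hsq : (C h2 : Polynomial R) * C h2 = C h4 := by
    rw [← map_mul]
    congr 1
    rw [hh2, hh4, ← map_mul]
    norm_num
  obtain ⟨Q', hQ'def⟩ : ∃ P, P = Q.comp (X + C h2) := ⟨_, rfl⟩
  have hcompid : (X + C h2).comp (X - C h2) = (X : Polynomial R) := by
    rw [add_comp, X_comp, C_comp]; ring
  have hoddQ' : Q'.comp (-X) = -Q' := by
    have e1 : (X + C h2).comp (-X) = C h2 - (X : Polynomial R) := by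
      rw [add_comp, X_comp, C_comp]; ring
    have hhalf : (1:R) - h2 = h2 := by
      rw [hh2, show (1:R) = algebraMap ℚ R 1 from (map_one _).symm, ← map_sub]
      norm_num
    have e2 : (1 - X : Polynomial R).comp (X + C h2) = C h2 - X := by
      rw [sub_comp, X_comp, one_comp]
      calc (1 : Polynomial R) - (X + C h2) = C ((1:R) - h2) - X := by
            rw [map_sub, map_one]; ring
        _ = C h2 - X := by rw [hhalf]
    rw [hQ'def, comp_assoc, e1, ← e2, ← comp_assoc, hQ, neg_comp]
  have heven : ∀ t, Q'.coeff (2*t) = 0 := by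
    intro t
    have hcc := coeff_comp_neg_X Q' (2*t)
    rw [hoddQ', coeff_neg] at hcc
    have hpow : ((-1:R))^(2*t) = 1 := by rw [pow_mul]; norm_num
    rw [hpow, one_mul] at hcc
    exact eq_zero_of_self_eq_neg hcc.symm
  have hdegQ' : Q'.natDegree ≤ 2*N+2 := by
    rw [hQ'def]
    refine le_trans natDegree_comp_le ?_
    rw [natDegree_X_add_C]
    omega
  obtain ⟨e, he⟩ : ∃ e, e = ∑ t ∈ range (N+1), C (Q'.coeff (2*t+1)) * X^t := ⟨_, rfl⟩
  have hdege : e.natDegree ≤ N := by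
    rw [he]
    refine natDegree_sum_le_of_forall_le _ _ (fun t ht => ?_)
    refine le_trans (natDegree_C_mul_le _ _) (le_trans (natDegree_X_pow_le _) ?_)
    simp only [mem_range] at ht; omega
  have hXe : Q' = X * e.comp (X^2) := by
    have hesum : e.comp (X^2) = ∑ t ∈ range (N+1), C (Q'.coeff (2*t+1)) * X^(2*t) := by
      rw [he, Polynomial.sum_comp]
      refine Finset.sum_congr rfl (fun t _ => ?_)
      rw [mul_comp, C_comp, pow_comp, X_comp, ← pow_mul]
    rw [hesum, Finset.mul_sum]
    ext k
    rw [finset_sum_coeff]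
    have hterm : ∀ t, (X * (C (Q'.coeff (2*t+1)) * X^(2*t))).coeff k
        = Q'.coeff (2*t+1) * (X^(2*t+1) : Polynomial R).coeff k := by
      intro t
      rw [mul_comm (X : Polynomial R) _, mul_assoc, ← pow_succ, coeff_C_mul]
    simp only [hterm, coeff_X_pow]
    rcases Nat.even_or_odd k with ⟨u, hu⟩ | ⟨u, hu⟩
    · subst hu
      rw [show u + u = 2*u by ring, heven]
      refine (Finset.sum_eq_zero (fun t _ => ?_)).symm
      rw [if_neg (by omega), mul_zero]
    · subst hu
      by_cases huN : u ≤ N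
      · rw [Finset.sum_eq_single u (fun t _ ht => by rw [if_neg (by omega), mul_zero])
          (fun hu => absurd (Finset.mem_range.2 (by omega)) hu)]
        rw [if_pos (by omega), mul_one]
      · have h0 : Q'.coeff (2*u+1) = 0 := coeff_eq_zero_of_natDegree_lt (by omega)
        rw [h0]
        refine (Finset.sum_eq_zero (fun t ht => ?_)).symm
        simp only [mem_range] at ht
        rw [if_neg (by omega), mul_zero]
  refine ⟨C h2 * (e.comp (X + C h4)), ?_, ?_⟩
  · refine le_trans (natDegree_C_mul_le _ _) (le_trans natDegree_comp_le ?_)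
    rw [natDegree_X_add_C]
    omega
  · have hQrec : Q = Q'.comp (X - C h2) := by
      rw [hQ'def, comp_assoc, hcompid, comp_X]
    have h1 : ((X^2 : Polynomial R)).comp (X - C h2) = X^2 - X + C h4 := by
      rw [pow_comp, X_comp]
      calc (X - C h2 : Polynomial R)^2 = X^2 - (2 * C h2) * X + C h2 * C h2 := by ring
        _ = X^2 - X + C h4 := by rw [hsq, h2eq]; ring
    have h3 : (e.comp (X + C h4)).comp (X^2 - X) = e.comp (X^2 - X + C h4) := by
      rw [comp_assoc, add_comp, X_comp, C_comp]
    rw [hQrec, hXe, mul_comp, X_comp, comp_assoc, h1]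
    conv_rhs => rw [mul_comp, C_comp, h3]
    linear_combination (-(X * e.comp (X^2 - X + C h4))) * h2eq

open PowerSeries Finset

noncomputable section Chunk3

abbrev R7 : Type := MvPolynomial ℕ ℚ

def agen : R7⟦X⟧ := PowerSeries.mk (fun i => MvPolynomial.X i)
def Ag : R7⟦X⟧ := 1 + agen * PowerSeries.X^2
def Lc (c : ℤ) : R7⟦X⟧ := 1 + PowerSeries.C (c : R7) * PowerSeries.X

lemma cc_Ag : PowerSeries.constantCoeff Ag = 1 := by
  simp [Ag, agen, map_add, map_mul, map_pow, constantCoeff_X]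

lemma cc_Lc (c : ℤ) : PowerSeries.constantCoeff (Lc c) = 1 := by
  simp [Lc, map_add, map_mul, constantCoeff_X]

def mku (f : R7⟦X⟧) (h : PowerSeries.constantCoeff f = 1) : (R7⟦X⟧)ˣ :=
  Units.mkOfMulEqOne f (PowerSeries.invOfUnit f 1)
    (PowerSeries.mul_invOfUnit f 1 (by rw [h]; rfl))

@[simp] lemma mku_val (f : R7⟦X⟧) (h : PowerSeries.constantCoeff f = 1) : (mku f h : R7⟦X⟧) = f := rfl

def Au : (R7⟦X⟧)ˣ := mku Ag cc_Ag
def Lu (c : ℤ) : (R7⟦X⟧)ˣ := mku (Lc c) (cc_Lc c)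

def Psi (j : ℤ) : (R7⟦X⟧)ˣ :=
  if 0 ≤ j then (∏ i ∈ Finset.range j.toNat, Lu i)⁻¹
  else ∏ i ∈ Finset.range (-j).toNat, Lu (-1 - i)

def Phi (j : ℤ) : (R7⟦X⟧)ˣ := Au^j * Psi j

lemma Psi_succ (j : ℤ) : Psi (j+1) = Psi j * (Lu j)⁻¹ := by
  rcases le_or_gt 0 j with hj | hj
  · rw [Psi, Psi, if_pos (show (0:ℤ) ≤ j+1 by omega), if_pos hj]
    have h1 : (j+1).toNat = j.toNat + 1 := by omega
    rw [h1, Finset.prod_range_succ, mul_inv_rev,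
      show ((j.toNat : ℤ)) = j from Int.toNat_of_nonneg hj, mul_comm]
  · obtain ⟨k, rfl⟩ : ∃ k:ℕ, j = -((k:ℤ)+1) := ⟨(-j).toNat - 1, by omega⟩
    rcases Nat.eq_zero_or_pos k with rfl | hk
    · rw [show (-(((0:ℕ):ℤ)+1)+1 : ℤ) = 0 by ring, Psi, Psi, if_pos le_rfl,
        if_neg (show ¬ (0:ℤ) ≤ -(((0:ℕ):ℤ)+1) by omega)]
      simp [Finset.prod_range_one]
    · rw [Psi, Psi, if_neg (show ¬ (0:ℤ) ≤ -((k:ℤ)+1)+1 by omega),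
        if_neg (show ¬ (0:ℤ) ≤ -((k:ℤ)+1) by omega)]
      have h1 : (-(-((k:ℤ)+1)+1)).toNat = k := by omega
      have h2 : (-(-((k:ℤ)+1))).toNat = k + 1 := by omega
      rw [h1, h2, Finset.prod_range_succ]
      have h3 : (-1 - (k:ℤ)) = -((k:ℤ)+1) := by ring
      rw [h3, mul_inv_cancel_right]

lemma Phi_succ (j : ℤ) : Phi (j+1) * Lu j = Phi j * Au := by
  rw [Phi, Phi, Psi_succ, zpow_add_one]
  rw [mul_assoc, inv_mul_cancel_right, mul_right_comm]

lemma key_rec (j : ℤ) : ((Phi (j+1) : (R7⟦X⟧)ˣ) : R7⟦X⟧) * Lc j = (Phi j : R7⟦X⟧) * Ag := by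
  have := congrArg (Units.val) (Phi_succ j)
  exact this

lemma Phi_zero : ((Phi 0 : (R7⟦X⟧)ˣ) : R7⟦X⟧) = 1 := by
  rw [Phi, zpow_zero, one_mul, Psi, if_pos le_rfl]
  simp

lemma cc_Phi (j : ℤ) : PowerSeries.constantCoeff (Phi j : R7⟦X⟧) = 1 := by
  induction j using Int.induction_on with
  | zero => rw [Phi_zero]; simp
  | succ i ih =>
    have h := congrArg (PowerSeries.constantCoeff) (key_rec i)
    rw [map_mul, map_mul, cc_Lc, cc_Ag, mul_one, mul_one] at h
    rw [h, ih]
  | pred i ih =>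
    have h := congrArg (PowerSeries.constantCoeff) (key_rec (-(i:ℤ)-1))
    rw [map_mul, map_mul, cc_Lc, cc_Ag, mul_one, mul_one] at h
    rw [show (-(i:ℤ)-1+1) = -(i:ℤ) by ring] at h
    rw [show (-(i:ℤ)-1) = -((i:ℤ)+1) by ring] at h ⊢
    rw [← h, ih]

lemma rec_coeff (m : ℕ) (j : ℤ) :
    (PowerSeries.coeff (m+1)) (Phi (j+1) : R7⟦X⟧) + (j : R7) * (PowerSeries.coeff m) (Phi (j+1) : R7⟦X⟧)
      = (PowerSeries.coeff (m+1)) (Phi j : R7⟦X⟧)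
        + (PowerSeries.coeff (m+1)) ((Phi j : R7⟦X⟧) * agen * PowerSeries.X^2) := by
  have h := congrArg (PowerSeries.coeff (m+1)) (key_rec j)
  rw [Lc, Ag, mul_add, mul_one, mul_add, mul_one, map_add, map_add] at h
  rw [show (Phi (j+1) : R7⟦X⟧) * (PowerSeries.C ((j:ℤ) : R7) * PowerSeries.X)
      = (PowerSeries.C ((j:ℤ) : R7) * (Phi (j+1) : R7⟦X⟧)) * PowerSeries.X by ring,
    coeff_succ_mul_X, PowerSeries.coeff_C_mul] at h
  rw [show (Phi j : R7⟦X⟧) * (agen * PowerSeries.X^2)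
      = (Phi j : R7⟦X⟧) * agen * PowerSeries.X^2 by ring] at h
  exact h

lemma coeff_one_term (j : ℤ) :
    (PowerSeries.coeff 1) ((Phi j : R7⟦X⟧) * agen * PowerSeries.X^2) = 0 := by
  rw [PowerSeries.coeff_mul_X_pow']
  simp

lemma coeff_term_ge (m : ℕ) (j : ℤ) :
    (PowerSeries.coeff (m+1+1)) ((Phi j : R7⟦X⟧) * agen * PowerSeries.X^2)
      = ∑ k ∈ Finset.range (m+1), (PowerSeries.coeff k) (Phi j : R7⟦X⟧) * MvPolynomial.X (m-k) := by
  rw [show m+1+1 = m+2 by ring, PowerSeries.coeff_mul_X_pow, PowerSeries.coeff_mul,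
    Finset.Nat.sum_antidiagonal_eq_sum_range_succ_mk]
  refine Finset.sum_congr rfl (fun k hk => ?_)
  rw [agen, coeff_mk]



lemma psi_poly : ∃ p : ℕ → Polynomial R7, ∀ m, (p m).natDegree ≤ 2*m ∧
    ∀ j : ℤ, (PowerSeries.coeff m) (Phi j : R7⟦X⟧) = (p m).eval ((j : ℤ) : R7) := by
  have key : ∀ M : ℕ, ∃ p : ℕ → Polynomial R7, ∀ m, m ≤ M → (p m).natDegree ≤ 2*m ∧
      ∀ j : ℤ, (PowerSeries.coeff m) (Phi j : R7⟦X⟧) = (p m).eval ((j:ℤ) : R7) := by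
    intro M
    induction M with
    | zero =>
      refine ⟨fun _ => 1, fun m hm => ?_⟩
      interval_cases m
      refine ⟨by simp, fun j => ?_⟩
      rw [coeff_zero_eq_constantCoeff_apply, cc_Phi]
      simp
    | succ M IH =>
      obtain ⟨p, hp⟩ := IH
      obtain ⟨G, hGdef⟩ : ∃ G : Polynomial R7, G = if M = 0 then 0 else
          ∑ k ∈ Finset.range M, Polynomial.C (MvPolynomial.X (M-1-k)) * p k := ⟨_, rfl⟩
      have hGdeg : G.natDegree ≤ 2*M := by
        rw [hGdef]
        split
        · simp
        · refine Polynomial.natDegree_sum_le_of_forall_le _ _ (fun k hk => ?_)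
          refine le_trans (Polynomial.natDegree_C_mul_le _ _) ?_
          simp only [Finset.mem_range] at hk
          have := (hp k (by omega)).1
          omega
      have hG : ∀ j : ℤ, (PowerSeries.coeff (M+1)) ((Phi j : R7⟦X⟧) * agen * PowerSeries.X^2)
          = G.eval ((j:ℤ):R7) := by
        intro j
        rcases Nat.eq_zero_or_pos M with rfl | hM
        · simp only [Nat.zero_add]
          rw [coeff_one_term, hGdef]
          simp
        · obtain ⟨m', rfl⟩ : ∃ m', M = m'+1 := ⟨M-1, by omega⟩
          rw [coeff_term_ge, hGdef, if_neg (by omega)]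
          rw [Polynomial.eval_finset_sum]
          simp only [Nat.add_sub_cancel]
          refine Finset.sum_congr rfl (fun k hk => ?_)
          simp only [Finset.mem_range] at hk
          rw [Polynomial.eval_mul, Polynomial.eval_C, ← (hp k (by omega)).2 j, mul_comm]
      obtain ⟨q, hqdef⟩ : ∃ q : Polynomial R7,
          q = G - Polynomial.X * ((p M).comp (Polynomial.X + 1)) := ⟨_, rfl⟩
      have hqdeg : q.natDegree ≤ 2*M + 1 := by
        have h1 : (Polynomial.X + 1 : Polynomial R7).natDegree = 1 := by
          rw [show (1 : Polynomial R7) = Polynomial.C 1 from (map_one _).symm,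
            Polynomial.natDegree_X_add_C]
        have h2 := Polynomial.natDegree_comp_le (p := p M) (q := Polynomial.X + 1)
        rw [h1, mul_one] at h2
        have h3 := (hp M le_rfl).1
        have h4 : (Polynomial.X * ((p M).comp (Polynomial.X + 1))).natDegree ≤ 2*M+1 := by
          refine le_trans Polynomial.natDegree_mul_le ?_
          rw [Polynomial.natDegree_X]
          omega
        rw [hqdef]
        exact le_trans (Polynomial.natDegree_sub_le _ _) (max_le (by omega) h4)
      have hq : ∀ j : ℤ, (PowerSeries.coeff (M+1)) (Phi (j+1) : R7⟦X⟧)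
          = (PowerSeries.coeff (M+1)) (Phi j : R7⟦X⟧) + q.eval ((j:ℤ):R7) := by
        intro j
        have h := rec_coeff M j
        rw [hG j, (hp M le_rfl).2 (j+1)] at h
        rw [hqdef, Polynomial.eval_sub, Polynomial.eval_mul, Polynomial.eval_X,
          Polynomial.eval_comp, Polynomial.eval_add, Polynomial.eval_X, Polynomial.eval_one]
        have hc : (((j+1:ℤ)) : R7) = ((j:ℤ):R7) + 1 := by push_cast; ring
        rw [hc] at h
        linear_combination h
      obtain ⟨pa, hpadeg, hpa0, hpastep⟩ := discrete_antideriv q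
      obtain ⟨pn, hpndef⟩ : ∃ pn : Polynomial R7,
          pn = pa + Polynomial.C ((PowerSeries.coeff (M+1)) (Phi 0 : R7⟦X⟧)) := ⟨_, rfl⟩
      have hpnstep : ∀ x : R7, pn.eval (x+1) = pn.eval x + q.eval x := by
        intro x
        rw [hpndef]
        simp only [Polynomial.eval_add, Polynomial.eval_C, hpastep x]
        ring
      have hnew : ∀ j : ℤ, (PowerSeries.coeff (M+1)) (Phi j : R7⟦X⟧) = pn.eval ((j:ℤ):R7) := by
        intro j
        induction j using Int.induction_on with
        | zero => rw [hpndef]; simp [hpa0]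
        | succ i ih =>
          have hc : ((((i:ℤ)+1):ℤ) : R7) = (((i:ℤ)):R7) + 1 := by push_cast; ring
          rw [hq (i:ℤ), ih, hc, hpnstep]
        | pred i ih =>
          have h := hq (-(i:ℤ)-1)
          rw [show (-(i:ℤ)-1+1) = -(i:ℤ) by ring, ih] at h
          have hs := hpnstep (((-(i:ℤ)-1 : ℤ)) : R7)
          have hc : (((-(i:ℤ)-1 : ℤ)):R7) + 1 = (((-(i:ℤ) : ℤ)) : R7) := by push_cast; ring
          rw [hc] at hs
          linear_combination hs - h
      refine ⟨Function.update p (M+1) pn, fun m hm => ?_⟩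
      rcases Nat.lt_or_ge m (M+1) with h | h
      · rw [Function.update_of_ne (by omega)]
        exact hp m (by omega)
      · have hmeq : m = M+1 := by omega
        subst hmeq
        rw [Function.update_self]
        constructor
        · rw [hpndef]
          refine le_trans (Polynomial.natDegree_add_le _ _) (max_le ?_ (by simp))
          omega
        · exact hnew
  choose f hf using key
  exact ⟨fun m => f m m, fun m => hf m m le_rfl⟩

lemma exists_r (N : ℕ) : ∃ r : Polynomial R7, r.natDegree ≤ N - 1 ∧ ∀ j : ℤ,
    (PowerSeries.coeff N) (((Phi j : R7⟦X⟧) - (Phi (1-j) : R7⟦X⟧)) * Ag)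
      = (2*((j:ℤ):R7) - 1) * r.eval (((j:ℤ):R7)^2 - ((j:ℤ):R7)) := by
  obtain ⟨p, hp⟩ := psi_poly
  obtain ⟨P, hPdef⟩ : ∃ P : Polynomial R7,
      P = ∑ k ∈ Finset.range (N+1), Polynomial.C ((PowerSeries.coeff (N-k)) Ag) * p k := ⟨_, rfl⟩
  have hPdeg : P.natDegree ≤ 2*N := by
    rw [hPdef]
    refine Polynomial.natDegree_sum_le_of_forall_le _ _ (fun k hk => ?_)
    refine le_trans (Polynomial.natDegree_C_mul_le _ _) ?_
    simp only [Finset.mem_range] at hk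
    have := (hp k).1
    omega
  have hPval : ∀ j : ℤ, (PowerSeries.coeff N) ((Phi j : R7⟦X⟧) * Ag) = P.eval ((j:ℤ):R7) := by
    intro j
    rw [PowerSeries.coeff_mul, Finset.Nat.sum_antidiagonal_eq_sum_range_succ_mk,
      hPdef, Polynomial.eval_finset_sum]
    refine Finset.sum_congr rfl (fun k hk => ?_)
    rw [Polynomial.eval_mul, Polynomial.eval_C, ← (hp k).2 j, mul_comm]
  obtain ⟨Q, hQdef⟩ : ∃ Q : Polynomial R7, Q = P - P.comp (1 - Polynomial.X) := ⟨_, rfl⟩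
  have hdeg1X : (1 - Polynomial.X : Polynomial R7).natDegree = 1 := by
    rw [show (1 - Polynomial.X : Polynomial R7) = -(Polynomial.X - Polynomial.C 1) by
      rw [map_one]; ring, Polynomial.natDegree_neg, Polynomial.natDegree_X_sub_C]
  have hQanti : Q.comp (1 - Polynomial.X) = -Q := by
    rw [hQdef, Polynomial.sub_comp, Polynomial.comp_assoc]
    have : ((1 - Polynomial.X : Polynomial R7)).comp (1 - Polynomial.X) = Polynomial.X := by
      rw [Polynomial.sub_comp, Polynomial.one_comp, Polynomial.X_comp]
      ring
    rw [this, Polynomial.comp_X]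
    ring
  have hQdeg : Q.natDegree ≤ 2*N := by
    rw [hQdef]
    refine le_trans (Polynomial.natDegree_sub_le _ _) (max_le (by omega) ?_)
    refine le_trans Polynomial.natDegree_comp_le ?_
    rw [hdeg1X, mul_one]
    omega
  have hQval : ∀ j : ℤ, (PowerSeries.coeff N) (((Phi j : R7⟦X⟧) - (Phi (1-j) : R7⟦X⟧)) * Ag)
      = Q.eval ((j:ℤ):R7) := by
    intro j
    rw [sub_mul, map_sub, hPval j, hPval (1-j), hQdef, Polynomial.eval_sub,
      Polynomial.eval_comp, Polynomial.eval_sub, Polynomial.eval_one, Polynomial.eval_X]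
    have hc : (((1-j:ℤ)):R7) = 1 - ((j:ℤ):R7) := by push_cast; ring
    rw [hc]
  obtain ⟨r, hrdeg, hrQ⟩ := antisym_poly_form (N-1) Q hQanti (le_trans hQdeg (by omega))
  refine ⟨r, hrdeg, fun j => ?_⟩
  rw [hQval j, hrQ, Polynomial.eval_mul, Polynomial.eval_comp, Polynomial.eval_sub,
    Polynomial.eval_mul, Polynomial.eval_sub, Polynomial.eval_pow, Polynomial.eval_X,
    Polynomial.eval_one]
  norm_num

lemma psi1 (j : ℤ) : (PowerSeries.coeff 1) (Phi j : R7⟦X⟧) = algebraMap ℚ R7 (-(j*(j-1))/2) := by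
  induction j using Int.induction_on with
  | zero => rw [Phi_zero]; simp
  | succ i ih =>
    have h := rec_coeff 0 (i:ℤ)
    simp only [zero_add] at h
    rw [coeff_one_term, coeff_zero_eq_constantCoeff_apply, cc_Phi, mul_one, add_zero, ih] at h
    rw [eq_sub_of_add_eq h,
      show (((i:ℤ)):R7) = algebraMap ℚ R7 ((i:ℤ):ℚ) from (map_intCast _ _).symm, ← map_sub]
    congr 1
    push_cast
    ring
  | pred i ih =>
    have h := rec_coeff 0 (-(i:ℤ)-1)
    simp only [zero_add] at h
    rw [coeff_one_term, coeff_zero_eq_constantCoeff_apply, cc_Phi, mul_one, add_zero,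
      show (-(i:ℤ)-1+1) = -(i:ℤ) by ring, ih] at h
    rw [← h,
      show ((-(i:ℤ)-1 : ℤ):R7) = algebraMap ℚ R7 ((-(i:ℤ)-1 : ℤ):ℚ) from (map_intCast _ _).symm,
      ← map_add]
    congr 1
    push_cast
    ring

lemma diff_low (j : ℤ) (m : ℕ) (hm : m < 2) :
    (PowerSeries.coeff m) ((Phi j : R7⟦X⟧) - (Phi (1-j) : R7⟦X⟧)) = 0 := by
  interval_cases m
  · rw [map_sub, coeff_zero_eq_constantCoeff_apply, coeff_zero_eq_constantCoeff_apply,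
      cc_Phi, cc_Phi, sub_self]
  · rw [map_sub, psi1, psi1, ← map_sub]
    convert map_zero (algebraMap ℚ R7) using 2
    push_cast
    ring


noncomputable def mapa (a : ℕ → ℝ) : R7⟦X⟧ →+* ℝ⟦X⟧ :=
  PowerSeries.map (MvPolynomial.aeval a).toRingHom

lemma mapa_coeff (a : ℕ → ℝ) (m : ℕ) (f : R7⟦X⟧) :
    PowerSeries.coeff m (mapa a f) = MvPolynomial.aeval a ((PowerSeries.coeff m) f) :=
  PowerSeries.coeff_map _ _ _

lemma mapa_Ag (a : ℕ → ℝ) : mapa a Ag = 1 + PowerSeries.mk a * PowerSeries.X^2 := by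
  have hagen : mapa a agen = PowerSeries.mk a := by
    ext m
    rw [mapa, PowerSeries.coeff_map, agen, coeff_mk, coeff_mk, AlgHom.toRingHom_eq_coe,
      RingHom.coe_coe, MvPolynomial.aeval_X]
  rw [Ag, map_add, map_one, map_mul, map_pow, hagen]
  rw [mapa, PowerSeries.map_X]

lemma mapa_Lc (a : ℕ → ℝ) (c : ℤ) :
    mapa a (Lc c) = 1 + PowerSeries.C ((c : ℝ)) * PowerSeries.X := by
  rw [Lc, map_add, map_one, map_mul, mapa, PowerSeries.map_X, PowerSeries.map_C]
  norm_num

lemma cc_mapa_one (a : ℕ → ℝ) {f : R7⟦X⟧} (h : PowerSeries.constantCoeff f = 1) :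
    PowerSeries.constantCoeff (mapa a f) = 1 := by
  rw [← coeff_zero_eq_constantCoeff_apply, mapa_coeff, coeff_zero_eq_constantCoeff_apply, h,
    map_one]

lemma mapa_inv_unit (a : ℕ → ℝ) (u : (R7⟦X⟧)ˣ) (h : PowerSeries.constantCoeff (mapa a (u : R7⟦X⟧)) = 1) :
    mapa a ((u⁻¹ : (R7⟦X⟧)ˣ) : R7⟦X⟧) = (mapa a (u : R7⟦X⟧))⁻¹ := by
  rw [PowerSeries.eq_inv_iff_mul_eq_one (by rw [h]; exact one_ne_zero), ← map_mul,
    Units.inv_mul, map_one]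

@[simp] lemma Au_val : ((Au : (R7⟦X⟧)ˣ) : R7⟦X⟧) = Ag := rfl
@[simp] lemma Lu_val (c : ℤ) : ((Lu c : (R7⟦X⟧)ˣ) : R7⟦X⟧) = Lc c := rfl

lemma cc_Phi_pow (j : ℤ) (k : ℕ) : PowerSeries.constantCoeff ((Au^k : (R7⟦X⟧)ˣ) : R7⟦X⟧) = 1 := by
  rw [Units.val_pow_eq_pow_val, map_pow, Au_val, cc_Ag, one_pow]

lemma Gmatch (j : ℕ) (a : ℕ → ℝ) : mapa a ((Phi (j:ℤ) : R7⟦X⟧)) = Gser j a := by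
  have hunits : Phi (j:ℤ) * (∏ i ∈ Finset.range j, Lu i) = Au ^ j := by
    rw [Phi, Psi, if_pos (by positivity), Int.toNat_natCast, mul_assoc, inv_mul_cancel,
      mul_one, zpow_natCast]
  have hval : ((Phi (j:ℤ) : R7⟦X⟧)) * (∏ i ∈ Finset.range j, Lc (i:ℤ)) = Ag ^ j := by
    have hv := congrArg Units.val hunits
    rw [Units.val_mul, Units.val_pow_eq_pow_val, Au_val] at hv
    rw [← hv]
    congr 1
    rw [← Units.coeHom_apply, map_prod]
    exact Finset.prod_congr rfl (fun i _ => rfl)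
  have himg := congrArg (mapa a) hval
  rw [map_mul, map_prod, map_pow, mapa_Ag] at himg
  have hLc : ∀ i : ℕ, i ∈ Finset.range j →
      mapa a (Lc (i:ℤ)) = 1 + PowerSeries.C ((i:ℝ)) * PowerSeries.X := by
    intro i _
    rw [mapa_Lc]
    norm_num
  rw [Finset.prod_congr rfl hLc] at himg
  have hGmul : Gser j a * (∏ i ∈ Finset.range j, (1 + PowerSeries.C (i:ℝ) * PowerSeries.X))
      = (1 + PowerSeries.mk a * PowerSeries.X^2)^j := by
    rw [Gser, mul_assoc, ← Finset.prod_mul_distrib]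
    have h1 : ∀ i ∈ Finset.range j,
        (1 + PowerSeries.C (i:ℝ) * PowerSeries.X)⁻¹ * (1 + PowerSeries.C (i:ℝ) * PowerSeries.X)
          = 1 := by
      intro i _
      refine PowerSeries.inv_mul_cancel _ ?_
      simp [constantCoeff_X]
    rw [Finset.prod_congr rfl h1, Finset.prod_const_one, mul_one]
  have hVne : (∏ i ∈ Finset.range j, (1 + PowerSeries.C (i:ℝ) * PowerSeries.X)) ≠ 0 := by
    intro h0
    have hcc := congrArg (PowerSeries.constantCoeff) h0
    rw [map_prod, map_zero] at hcc
    have : ∀ i ∈ Finset.range j,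
        PowerSeries.constantCoeff (1 + PowerSeries.C (i:ℝ) * PowerSeries.X) = 1 := by
      intro i _; simp [constantCoeff_X]
    rw [Finset.prod_congr rfl this, Finset.prod_const_one] at hcc
    exact one_ne_zero hcc
  exact mul_right_cancel₀ hVne (himg.trans hGmul.symm)

lemma Psi_neg (k : ℕ) : Psi (-(k:ℤ)) = ∏ i ∈ Finset.range k, Lu (-1 - (i:ℤ)) := by
  rcases Nat.eq_zero_or_pos k with rfl | hk
  · rw [show (-((0:ℕ):ℤ)) = 0 by ring, Psi, if_pos le_rfl]
    simp
  · rw [Psi, if_neg (by omega), show ((-(-(k:ℤ))).toNat) = k by omega]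

lemma Hmatch (j : ℕ) (hj : 1 ≤ j) (a : ℕ → ℝ) :
    mapa a ((Phi (1-(j:ℤ)) : R7⟦X⟧)) = Hser j a := by
  have hcast : ((j-1:ℕ):ℤ) = (j:ℤ) - 1 := by omega
  have hunits : Phi (1-(j:ℤ)) * Au ^ (j-1) = ∏ i ∈ Finset.range (j-1), Lu (-1 - (i:ℤ)) := by
    rw [Phi, mul_right_comm, ← zpow_natCast Au (j-1), ← zpow_add, hcast,
      show (1-(j:ℤ)) + ((j:ℤ)-1) = 0 by ring, zpow_zero, one_mul,
      show (1-(j:ℤ)) = -((j-1:ℕ):ℤ) by omega, Psi_neg]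
  have hval : ((Phi (1-(j:ℤ)) : R7⟦X⟧)) * Ag ^ (j-1)
      = ∏ i ∈ Finset.range (j-1), Lc (-1 - (i:ℤ)) := by
    have hv := congrArg Units.val hunits
    rw [Units.val_mul, Units.val_pow_eq_pow_val, Au_val] at hv
    rw [hv, ← Units.coeHom_apply, map_prod]
    exact Finset.prod_congr rfl (fun i _ => rfl)
  have himg := congrArg (mapa a) hval
  rw [map_mul, map_prod, map_pow, mapa_Ag] at himg
  have hLc : ∀ i : ℕ, i ∈ Finset.range (j-1) →
      mapa a (Lc (-1 - (i:ℤ))) = 1 - PowerSeries.C (((1+i:ℕ)):ℝ) * PowerSeries.X := by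
    intro i _
    rw [mapa_Lc]
    have : ((-1 - (i:ℤ) : ℤ) : ℝ) = -(((1+i:ℕ)):ℝ) := by push_cast; ring
    rw [this, map_neg, neg_mul]
    ring
  rw [Finset.prod_congr rfl hLc] at himg
  have hprodeq : ∏ i ∈ Finset.Icc 1 (j-1), (1 - PowerSeries.C (i:ℝ) * PowerSeries.X)
      = ∏ i ∈ Finset.range (j-1), (1 - PowerSeries.C (((1+i:ℕ)):ℝ) * PowerSeries.X) := by
    rw [← Finset.Ico_add_one_right_eq_Icc, Finset.prod_Ico_eq_prod_range]
    simp only [Nat.add_sub_cancel]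
  have hccpow : PowerSeries.constantCoeff ((1 + PowerSeries.mk a * PowerSeries.X^2)^(j-1)) = 1 := by
    rw [map_pow]
    simp [constantCoeff_X, pow_two, map_mul]
  have hHmul : Hser j a * (1 + PowerSeries.mk a * PowerSeries.X^2)^(j-1)
      = ∏ i ∈ Finset.Icc 1 (j-1), (1 - PowerSeries.C (i:ℝ) * PowerSeries.X) := by
    rw [Hser, mul_assoc, PowerSeries.inv_mul_cancel _ (by rw [hccpow]; exact one_ne_zero),
      mul_one]
  have hPne : (1 + PowerSeries.mk a * PowerSeries.X^2)^(j-1) ≠ 0 := by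
    intro h0
    rw [h0, map_zero] at hccpow
    exact one_ne_zero hccpow.symm
  refine mul_right_cancel₀ hPne ?_
  rw [himg, hHmul, hprodeq]

lemma coeff_of_dvd_mul {N : ℕ} {d : ℝ⟦X⟧} (w : ℝ⟦X⟧) (h : (PowerSeries.X : ℝ⟦X⟧)^N ∣ d) :
    PowerSeries.coeff N (d * w) = PowerSeries.coeff N d * PowerSeries.constantCoeff w := by
  obtain ⟨e, rfl⟩ := h
  have h1 := PowerSeries.coeff_X_pow_mul (e * w) N 0
  have h2 := PowerSeries.coeff_X_pow_mul e N 0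
  rw [zero_add] at h1 h2
  rw [mul_assoc, h1, h2, coeff_zero_eq_constantCoeff_apply, coeff_zero_eq_constantCoeff_apply,
    map_mul]

lemma pow_diff (N : ℕ) (u v : ℝ⟦X⟧) (hu : PowerSeries.constantCoeff u = 1) (hv : PowerSeries.constantCoeff v = 1)
    (h : (PowerSeries.X : ℝ⟦X⟧)^N ∣ u - v) (k : ℕ) :
    (PowerSeries.X : ℝ⟦X⟧)^N ∣ u^k - v^k ∧
      PowerSeries.coeff N (u^k - v^k) = k * PowerSeries.coeff N (u - v) := by
  induction k with
  | zero => simp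
  | succ k ih =>
    have hdecomp : u^(k+1) - v^(k+1) = (u - v) * u^k + (u^k - v^k) * v := by ring
    constructor
    · rw [hdecomp]; exact dvd_add (h.mul_right _) (ih.1.mul_right _)
    · rw [hdecomp, map_add, coeff_of_dvd_mul _ h, coeff_of_dvd_mul _ ih.1, ih.2,
        map_pow, hu, one_pow, hv]
      push_cast
      ring

lemma inv_diff (N : ℕ) (u v : ℝ⟦X⟧) (hu : PowerSeries.constantCoeff u = 1) (hv : PowerSeries.constantCoeff v = 1)
    (h : (PowerSeries.X : ℝ⟦X⟧)^N ∣ u - v) :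
    (PowerSeries.X : ℝ⟦X⟧)^N ∣ u⁻¹ - v⁻¹ ∧
      PowerSeries.coeff N (u⁻¹ - v⁻¹) = - PowerSeries.coeff N (u - v) := by
  have hu0 : PowerSeries.constantCoeff u ≠ 0 := by rw [hu]; exact one_ne_zero
  have hv0 : PowerSeries.constantCoeff v ≠ 0 := by rw [hv]; exact one_ne_zero
  have h1 : u * u⁻¹ = 1 := PowerSeries.mul_inv_cancel _ hu0
  have h2 : v * v⁻¹ = 1 := PowerSeries.mul_inv_cancel _ hv0
  have hid : u⁻¹ - v⁻¹ = (v - u) * (u⁻¹ * v⁻¹) := by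
    calc u⁻¹ - v⁻¹ = u⁻¹ * (v * v⁻¹) - (u * u⁻¹) * v⁻¹ := by rw [h2, h1]; ring
      _ = (v - u) * (u⁻¹ * v⁻¹) := by ring
  have hdvd : (PowerSeries.X : ℝ⟦X⟧)^N ∣ v - u := by
    rw [show v - u = -(u-v) by ring]
    exact dvd_neg.mpr h
  constructor
  · rw [hid]; exact hdvd.mul_right _
  · rw [hid, coeff_of_dvd_mul _ hdvd, show v - u = -(u-v) by ring, map_neg, map_mul,
      PowerSeries.constantCoeff_inv, PowerSeries.constantCoeff_inv, hu, hv]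
    norm_num

lemma claimA (N : ℕ) (hN : 2 ≤ N) (j : ℕ) (hj : 1 ≤ j) (a a' : ℕ → ℝ)
    (hagree : ∀ t, t < N - 2 → a t = a' t) :
    PowerSeries.coeff N ((Gser j a - Hser j a) * (1 + PowerSeries.mk a * PowerSeries.X^2))
      - PowerSeries.coeff N ((Gser j a' - Hser j a') * (1 + PowerSeries.mk a' * PowerSeries.X^2))
    = (2*(j:ℝ) - 1) * (a (N-2) - a' (N-2)) := by
  obtain ⟨u, hu_def⟩ : ∃ u : ℝ⟦X⟧, u = 1 + PowerSeries.mk a * PowerSeries.X^2 := ⟨_, rfl⟩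
  obtain ⟨v, hv_def⟩ : ∃ v : ℝ⟦X⟧, v = 1 + PowerSeries.mk a' * PowerSeries.X^2 := ⟨_, rfl⟩
  have hu : PowerSeries.constantCoeff u = 1 := by rw [hu_def]; simp [constantCoeff_X, pow_two, map_mul]
  have hv : PowerSeries.constantCoeff v = 1 := by rw [hv_def]; simp [constantCoeff_X, pow_two, map_mul]
  have huvmk : u - v = PowerSeries.mk (fun t => a t - a' t) * PowerSeries.X^2 := by
    have hmm : PowerSeries.mk (fun t => a t - a' t) = PowerSeries.mk a - PowerSeries.mk a' := by
      ext t
      simp [coeff_mk]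
    rw [hu_def, hv_def, hmm]
    ring
  have hdvd : (PowerSeries.X : ℝ⟦X⟧)^N ∣ u - v := by
    rw [huvmk, PowerSeries.X_pow_dvd_iff]
    intro m hm
    rw [PowerSeries.coeff_mul_X_pow']
    split
    · rw [coeff_mk]
      have : m - 2 < N - 2 := by omega
      rw [hagree _ this, sub_self]
    · rfl
  have hcoeffuv : PowerSeries.coeff N (u - v) = a (N-2) - a' (N-2) := by
    rw [huvmk, PowerSeries.coeff_mul_X_pow', if_pos (by omega), coeff_mk]
  obtain ⟨Pinv, hPinv_def⟩ : ∃ P : ℝ⟦X⟧,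
      P = ∏ i ∈ Finset.range j, (1 + PowerSeries.C (i:ℝ) * PowerSeries.X)⁻¹ := ⟨_, rfl⟩
  obtain ⟨Qp, hQp_def⟩ : ∃ Q : ℝ⟦X⟧,
      Q = ∏ i ∈ Finset.Icc 1 (j-1), (1 - PowerSeries.C (i:ℝ) * PowerSeries.X) := ⟨_, rfl⟩
  have hccPinv : PowerSeries.constantCoeff Pinv = 1 := by
    rw [hPinv_def, map_prod]
    rw [Finset.prod_congr rfl (fun i _ => ?_), Finset.prod_const_one]
    rw [PowerSeries.constantCoeff_inv]
    simp [constantCoeff_X]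
  have hccQp : PowerSeries.constantCoeff Qp = 1 := by
    rw [hQp_def, map_prod]
    rw [Finset.prod_congr rfl (fun i _ => ?_), Finset.prod_const_one]
    simp [constantCoeff_X]
  have hccupow : PowerSeries.constantCoeff (u^(j-1)) = 1 := by rw [map_pow, hu, one_pow]
  have hccvpow : PowerSeries.constantCoeff (v^(j-1)) = 1 := by rw [map_pow, hv, one_pow]
  have hP := pow_diff N u v hu hv hdvd (j+1)
  have hIpow := pow_diff N u v hu hv hdvd (j-1)
  have hI := inv_diff N (u^(j-1)) (v^(j-1)) hccupow hccvpow hIpow.1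
  obtain ⟨inner, hinner_def⟩ : ∃ w : ℝ⟦X⟧,
      w = (u^(j-1))⁻¹ * u - (v^(j-1))⁻¹ * v := ⟨_, rfl⟩
  have hinner2 : inner = (u - v) * (u^(j-1))⁻¹ + ((u^(j-1))⁻¹ - (v^(j-1))⁻¹) * v := by
    rw [hinner_def]; ring
  have hinnerdvd : (PowerSeries.X : ℝ⟦X⟧)^N ∣ inner := by
    rw [hinner2]
    exact dvd_add (hdvd.mul_right _) (hI.1.mul_right _)
  have hinnercoeff : PowerSeries.coeff N inner
      = PowerSeries.coeff N (u - v) - ((j:ℝ)-1) * PowerSeries.coeff N (u - v) := by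
    rw [hinner2, map_add, coeff_of_dvd_mul _ hdvd, coeff_of_dvd_mul _ hI.1, hI.2, hIpow.2,
      PowerSeries.constantCoeff_inv, hccupow, hv]
    have hjc : ((j-1 : ℕ) : ℝ) = (j:ℝ) - 1 := by
      have : ((j-1:ℕ):ℝ) = ((j:ℕ):ℝ) - 1 := by
        push_cast [hj]
        ring
      rw [this]
    rw [hjc]
    norm_num
    ring
  have hE : (Gser j a - Hser j a) * u - (Gser j a' - Hser j a') * v
      = (u^(j+1) - v^(j+1)) * Pinv - inner * Qp := by
    rw [Gser, Hser, Gser, Hser, hinner_def, ← hPinv_def, ← hQp_def, ← hu_def, ← hv_def]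
    ring
  rw [← hu_def, ← hv_def, ← map_sub, hE, map_sub, coeff_of_dvd_mul _ hP.1,
    coeff_of_dvd_mul _ hinnerdvd, hP.2, hinnercoeff, hcoeffuv, hccPinv, hccQp]
  push_cast
  ring

lemma mk_zero_fun : PowerSeries.mk (fun _ => (0:ℝ)) = 0 := by
  ext t
  simp [coeff_mk]

lemma inv_one_add_X : (1 + PowerSeries.X : ℝ⟦X⟧)⁻¹ = PowerSeries.mk (fun t => (-1:ℝ)^t) := by
  rw [PowerSeries.inv_eq_iff_mul_eq_one (by simp [constantCoeff_X])]
  ext t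
  rcases t with _ | t
  · rw [mul_add, mul_one, map_add, coeff_zero_eq_constantCoeff_apply,
      coeff_zero_eq_constantCoeff_apply, coeff_zero_eq_constantCoeff_apply, map_mul,
      constantCoeff_X]
    simp
  · rw [mul_add, mul_one, map_add, coeff_mk, coeff_succ_mul_X, coeff_mk, PowerSeries.coeff_one]
    rw [if_neg (by omega)]
    rw [pow_succ]
    ring

lemma hEval_main (k : ℕ) (r : Polynomial R7) (hrdeg : r.natDegree ≤ k+1)
    (hrval : ∀ j : ℤ, (PowerSeries.coeff (k+2)) (((Phi j : R7⟦X⟧) - (Phi (1-j) : R7⟦X⟧)) * Ag)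
      = (2*((j:ℤ):R7) - 1) * r.eval (((j:ℤ):R7)^2 - ((j:ℤ):R7)))
    (j : ℕ) (hj : 1 ≤ j) (c : ℕ → ℝ) :
    PowerSeries.coeff (k+2) ((Gser j c - Hser j c) * (1 + PowerSeries.mk c * PowerSeries.X^2))
      = (2*(j:ℝ)-1) * ∑ i ∈ Finset.range (k+2),
          MvPolynomial.aeval c (r.coeff i) * ((j:ℝ)*((j:ℝ)-1))^i := by
  have hGH : Gser j c - Hser j c
      = mapa c ((Phi ((j:ℕ):ℤ) : R7⟦X⟧) - (Phi (1-((j:ℕ):ℤ)) : R7⟦X⟧)) := by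
    rw [map_sub, Gmatch, Hmatch j hj]
  rw [hGH, show (1 + PowerSeries.mk c * PowerSeries.X^2 : ℝ⟦X⟧) = mapa c Ag
      from (mapa_Ag c).symm, ← map_mul, mapa_coeff, hrval ((j:ℕ):ℤ)]
  have h1 : (MvPolynomial.aeval c) (((((j:ℕ):ℤ)):R7)) = (j:ℝ) := by
    rw [map_intCast]
    push_cast
    ring
  rw [map_mul]
  congr 1
  · rw [map_sub, map_mul, map_one, map_ofNat, h1]
  · rw [Polynomial.eval_eq_sum_range' (show r.natDegree < k+2 by omega), map_sum]
    refine Finset.sum_congr rfl (fun i _ => ?_)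
    rw [map_mul, map_pow, map_sub, map_pow, h1]
    congr 2
    ring

theorem stmt7 (n : ℕ) (hn : 1 ≤ n) :
    ∃ S : ℕ → MvPolynomial (Fin (n - 1)) ℚ,
      (∀ j : ℕ, 1 ≤ j → ∀ a : ℕ → ℝ,
        (PowerSeries.X ^ 2 ∣ Gser j a - Hser j a) ∧
        (∀ D : PowerSeries ℝ, Gser j a - Hser j a = PowerSeries.X ^ 2 * D →
          PowerSeries.coeff (n - 1)
              (D * (1 + PowerSeries.mk a * PowerSeries.X ^ 2)) =
            (2 * (j : ℝ) - 1) *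
              (a (n - 1) + ∑ i ∈ Finset.range (n + 1),
                MvPolynomial.aeval (fun t : Fin (n - 1) => a (t : ℕ)) (S i) *
                  ((j : ℝ) * ((j : ℝ) - 1)) ^ i))) ∧
      (n = 1 → S 0 = 0 ∧ S 1 = MvPolynomial.C (1/6 : ℚ)) := by
  obtain ⟨k, rfl⟩ : ∃ k, n = k + 1 := ⟨n-1, by omega⟩
  simp only [Nat.add_sub_cancel]
  obtain ⟨r, hrdeg, hrval⟩ := exists_r (k+2)
  have hrdeg' : r.natDegree ≤ k+1 := le_trans hrdeg (by omega)
  have hEval := hEval_main k r hrdeg' hrval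
  obtain ⟨ρ, hρdef⟩ : ∃ ρ : R7 →ₐ[ℚ] MvPolynomial (Fin k) ℚ,
      ρ = MvPolynomial.aeval (fun t : ℕ =>
        if h : t < k then MvPolynomial.X (⟨t, h⟩ : Fin k) else 0) := ⟨_, rfl⟩
  have hcomp : ∀ (a : ℕ → ℝ) (p : R7),
      MvPolynomial.aeval (fun t : Fin k => a (t:ℕ)) (ρ p)
        = MvPolynomial.aeval (fun t : ℕ => if t < k then a t else 0) p := by
    intro a p
    rw [hρdef, MvPolynomial.comp_aeval_apply]
    have hgen : ∀ f g : ℕ → ℝ, f = g →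
        (MvPolynomial.aeval f) p = (MvPolynomial.aeval g) p := fun f g h => by rw [h]
    apply hgen
    funext t
    by_cases h : t < k
    · rw [dif_pos h, if_pos h, MvPolynomial.aeval_X]
    · rw [dif_neg h, if_neg h, map_zero]
  have hmain : ∀ j : ℕ, 1 ≤ j → ∀ a : ℕ → ℝ, ∀ D : PowerSeries ℝ,
      Gser j a - Hser j a = PowerSeries.X ^ 2 * D →
      PowerSeries.coeff k (D * (1 + PowerSeries.mk a * PowerSeries.X ^ 2)) =
        (2 * (j : ℝ) - 1) * (a k + ∑ i ∈ Finset.range (k + 1 + 1),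
          MvPolynomial.aeval (fun t : Fin k => a (t : ℕ)) (ρ (r.coeff i)) *
            ((j : ℝ) * ((j : ℝ) - 1)) ^ i) := by
    intro j hj a D hD
    obtain ⟨a0, ha0⟩ : ∃ a0 : ℕ → ℝ, a0 = fun t => if t < k then a t else 0 := ⟨_, rfl⟩
    have hX : PowerSeries.coeff k (D * (1 + PowerSeries.mk a * PowerSeries.X^2))
        = PowerSeries.coeff (k+2) ((Gser j a - Hser j a)
            * (1 + PowerSeries.mk a * PowerSeries.X^2)) := by
      rw [hD, mul_assoc]
      exact (PowerSeries.coeff_X_pow_mul _ 2 k).symm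
    have hA := claimA (k+2) (by omega) j hj a a0
      (fun t ht => by
        rw [ha0]
        show a t = if t < k then a t else 0
        rw [if_pos (show t < k by omega)])
    simp only [Nat.add_sub_cancel] at hA
    have hEa0 := hEval j hj a0
    have ha0k : a0 k = 0 := by rw [ha0]; simp
    rw [ha0k, sub_zero] at hA
    have hEa0' : PowerSeries.coeff (k+2) ((Gser j a0 - Hser j a0)
        * (1 + PowerSeries.mk a0 * PowerSeries.X^2))
        = (2*(j:ℝ)-1) * ∑ i ∈ Finset.range (k+2),
            MvPolynomial.aeval (fun t : Fin k => a (t:ℕ)) (ρ (r.coeff i))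
              * ((j:ℝ)*((j:ℝ)-1))^i := by
      rw [hEa0]
      congr 1
      refine Finset.sum_congr rfl (fun i _ => ?_)
      rw [hcomp, ha0]
    rw [hX]
    have hrange : k + 1 + 1 = k + 2 := rfl
    rw [hrange]
    linear_combination hA + hEa0'
  refine ⟨fun i => ρ (r.coeff i), fun j hj a => ⟨?_, hmain j hj a⟩, ?_⟩
  · rw [show Gser j a - Hser j a
        = mapa a ((Phi ((j:ℕ):ℤ) : R7⟦X⟧) - (Phi (1-((j:ℕ):ℤ)) : R7⟦X⟧)) from by
          rw [map_sub, Gmatch, Hmatch j hj]]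
    rw [PowerSeries.X_pow_dvd_iff]
    intro m hm
    rw [mapa_coeff, diff_low _ m hm, map_zero]
  · intro h1
    obtain rfl : k = 0 := by omega
    obtain ⟨z, hz⟩ : ∃ z : ℕ → ℝ, z = (fun _ => (0:ℝ)) := ⟨_, rfl⟩
    have hmkz : PowerSeries.mk z = 0 := by rw [hz]; exact mk_zero_fun
    have hG1 : Gser 1 z = 1 := by
      rw [Gser, hmkz, Finset.prod_range_one]
      norm_num
    have hH1 : Hser 1 z = 1 := by
      rw [Hser, hmkz]
      norm_num
    have hD1 : Gser 1 z - Hser 1 z = PowerSeries.X^2 * 0 := by rw [hG1, hH1]; ring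
    have hid1 := hmain 1 le_rfl z 0 hD1
    have hG2 : Gser 2 z = (1 + PowerSeries.X)⁻¹ := by
      rw [Gser, hmkz, Finset.prod_range_succ, Finset.prod_range_one]
      norm_num
    have hH2 : Hser 2 z = 1 - PowerSeries.X := by
      rw [Hser, hmkz]
      norm_num [Finset.Icc_self, Finset.prod_singleton]
    have hD2 : Gser 2 z - Hser 2 z
        = PowerSeries.X^2 * PowerSeries.mk (fun t => (-1:ℝ)^t) := by
      rw [hG2, hH2, inv_one_add_X]
      ext t
      rcases t with _ | _ | t
      · simp [PowerSeries.coeff_X_pow_mul', coeff_mk, PowerSeries.coeff_one, PowerSeries.coeff_X]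
      · simp [PowerSeries.coeff_X_pow_mul', coeff_mk, PowerSeries.coeff_one, PowerSeries.coeff_X]
      · rw [map_sub, coeff_mk, map_sub, PowerSeries.coeff_one, PowerSeries.coeff_X,
          show t+1+1 = t+2 from rfl, PowerSeries.coeff_X_pow_mul _ 2 t, coeff_mk,
          if_neg (show ¬ (t+2) = 0 by omega), if_neg (show ¬ (t+2) = 1 by omega)]
        rw [show t+2 = t+1+1 from rfl, pow_succ, pow_succ]
        ring
    have hid2 := hmain 2 (by norm_num) z _ hD2
    obtain ⟨c0, hc0⟩ := MvPolynomial.C_surjective (Fin 0) (ρ (r.coeff 0))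
    obtain ⟨c1, hc1⟩ := MvPolynomial.C_surjective (Fin 0) (ρ (r.coeff 1))
    have haC : ∀ (c : ℚ) (g : Fin 0 → ℝ), MvPolynomial.aeval g (MvPolynomial.C c) = (c:ℝ) := by
      intro c g
      rw [MvPolynomial.aeval_C]
      exact eq_ratCast _ c
    rw [zero_mul, map_zero, hz, Finset.sum_range_succ, Finset.sum_range_one, ← hc0, ← hc1,
      haC, haC] at hid1
    rw [hmkz, show (1 + 0 * PowerSeries.X^2 : ℝ⟦X⟧) = 1 by ring, mul_one,
      coeff_zero_eq_constantCoeff_apply,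
      show PowerSeries.constantCoeff (PowerSeries.mk (fun t => (-1:ℝ)^t)) = 1 by
        rw [← coeff_zero_eq_constantCoeff_apply, coeff_mk]; norm_num,
      hz, Finset.sum_range_succ, Finset.sum_range_one, ← hc0, ← hc1, haC, haC] at hid2
    norm_num at hid1 hid2
    have hc0v : c0 = 0 := by exact_mod_cast hid1.symm
    have hc1v : c1 = 1/6 := by
      rw [hc0v] at hid2
      push_cast at hid2
      have hy : (c1 : ℝ) = ((1/6 : ℚ) : ℝ) := by push_cast; linarith [hid2]
      exact_mod_cast hy
    constructor
    · show ρ (r.coeff 0) = 0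
      rw [← hc0, hc0v, map_zero]
    · show ρ (r.coeff 1) = MvPolynomial.C (1/6 : ℚ)
      rw [← hc1, hc1v]
end Chunk3
end

section
/- For every integer n≥0 there exist polynomials p_n, r_n ∈ ℚ[X], each of degree at most 2n, such that p_n(j) = σ_n(j) and r_n(j) = Q_n(j) for all integers j≥1; these polynomials are unique, and they satisfy the identity r_n(1−X) = (−1)^n p_n(X) in ℚ[X]. -/
open Polynomial Finset


/-- `σ_i(j) = Σ_{1 ≤ n_1 < ⋯ < n_i ≤ j-1} n_1 ⋯ n_i`, with `σ_0(j) = 1`. -/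
def sigmaP (i j : ℕ) : ℚ :=
  ∑ t ∈ (Finset.Icc 1 (j - 1)).powersetCard i, ∏ m ∈ t, (m : ℚ)

/-- `Q_0(j) = 1` and `Q_k(j) = -Σ_{i=1}^{k} σ_i(j) Q_{k-i}(j)` for `k ≥ 1`. -/
def QP (j : ℕ) : ℕ → ℚ
  | 0 => 1
  | k + 1 => -∑ i : Fin (k + 1), sigmaP (i + 1) j * QP j (k - i)
  termination_by k => k
  decreasing_by omega

lemma sigmaP_zero (j : ℕ) : sigmaP 0 j = 1 := by simp [sigmaP]

lemma sigmaP_succ_one (n : ℕ) : sigmaP (n+1) 1 = 0 := by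
  have : ((∅ : Finset ℕ)).powersetCard (n+1) = ∅ := by
    rw [Finset.powersetCard_eq_empty]; simp
  simp [sigmaP, this]

lemma sigmaP_succ_succ (n m : ℕ) :
    sigmaP (n+1) (m+2) = sigmaP (n+1) (m+1) + (m+1) * sigmaP n (m+1) := by
  have hnot : (m+1) ∉ Finset.Icc 1 m := by simp
  have hins : Finset.Icc 1 (m+1) = insert (m+1) (Finset.Icc 1 m) := by
    ext x; simp [Finset.mem_Icc]; omega
  unfold sigmaP
  simp only [show m+2-1 = m+1 from rfl, show m+1-1 = m from rfl]
  rw [hins, Finset.powersetCard_succ_insert hnot, Finset.sum_union, Finset.sum_image]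
  · rw [Finset.mul_sum]
    congr 1
    apply Finset.sum_congr rfl
    intro t ht
    have htnot : (m+1) ∉ t := fun h => hnot ((Finset.mem_powersetCard.1 ht).1 h)
    rw [Finset.prod_insert htnot]
    push_cast; ring
  · intro t1 h1 t2 h2 h
    have h1' : (m+1) ∉ t1 := fun h => hnot ((Finset.mem_powersetCard.1 h1).1 h)
    have h2' : (m+1) ∉ t2 := fun h => hnot ((Finset.mem_powersetCard.1 h2).1 h)
    have := congrArg (Finset.erase · (m+1)) h
    simpa [Finset.erase_insert, h1', h2'] using this
  · rw [Finset.disjoint_left]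
    intro t ht ht'
    obtain ⟨t0, ht0, rfl⟩ := Finset.mem_image.1 ht'
    have : (m+1) ∉ t0 := fun h => hnot ((Finset.mem_powersetCard.1 ht0).1 h)
    exact (fun h => hnot ((Finset.mem_powersetCard.1 ht).1 h)) (Finset.mem_insert_self _ _)


lemma desc_comp (d : ℕ) :
    (descPochhammer ℚ (d+1)).comp (X + 1) =
      descPochhammer ℚ (d+1) + ((d : ℚ[X]) + 1) * descPochhammer ℚ d := by
  have h1 : (descPochhammer ℚ (d+1)).comp (X + 1) = (X + 1) * descPochhammer ℚ d := by
    rw [descPochhammer_succ_left, mul_comp, X_comp, comp_assoc]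
    have : ((X : ℚ[X]) - 1).comp (X + 1) = X := by
      rw [sub_comp, X_comp, one_comp]; ring
    rw [this, comp_X]
  rw [h1, descPochhammer_succ_right]
  ring

lemma exists_shift_aux : ∀ d : ℕ, ∀ q : ℚ[X], q.natDegree ≤ d →
    ∃ Q : ℚ[X], Q.natDegree ≤ d + 1 ∧ Q.comp (X + 1) = Q + q := by
  intro d
  induction d with
  | zero =>
    intro q hq
    obtain ⟨a, rfl⟩ : ∃ a, q = C a := ⟨q.coeff 0, eq_C_of_natDegree_le_zero hq⟩
    refine ⟨a • X, (natDegree_smul_le _ _).trans (by simp), ?_⟩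
    rw [smul_comp, X_comp, smul_add]
    simp [Polynomial.smul_eq_C_mul]
  | succ d ih =>
    intro q hq
    set c := q.coeff (d+1) with hc
    set T : ℚ[X] := (c / (d+2)) • descPochhammer ℚ (d+2) with hT
    have hTcomp : T.comp (X + 1) = T + c • descPochhammer ℚ (d+1) := by
      rw [hT, smul_comp, desc_comp (d+1), smul_add]
      congr 1
      rw [smul_eq_C_mul, smul_eq_C_mul]
      have h2 : ((d:ℚ)+2) ≠ 0 := by positivity
      have h3 : ((↑(d+1) : ℚ[X]) + 1) = C ((d:ℚ)+2) := by
        rw [map_add, map_ofNat, Polynomial.C_eq_natCast]; push_cast; ring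
      rw [h3, ← mul_assoc, ← C_mul, div_mul_cancel₀ _ h2]
    set q' : ℚ[X] := q - c • descPochhammer ℚ (d+1) with hq'
    have hdeg' : q'.natDegree ≤ d := by
      rw [natDegree_le_iff_coeff_eq_zero]
      intro N hN
      rcases eq_or_lt_of_le (Nat.succ_le_of_lt hN) with h | h
      · rw [hq', coeff_sub, coeff_smul]
        rw [← h]
        have hm : (descPochhammer ℚ (d+1)).coeff (d+1) = 1 := by
          have := monic_descPochhammer ℚ (d+1)
          rw [Polynomial.Monic, Polynomial.leadingCoeff, descPochhammer_natDegree] at this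
          exact this
        rw [hm, ← hc]
        simp
      · have hqn : q.coeff N = 0 := coeff_eq_zero_of_natDegree_lt (lt_of_le_of_lt hq h)
        have hdn : (descPochhammer ℚ (d+1)).coeff N = 0 := by
          apply coeff_eq_zero_of_natDegree_lt
          rw [descPochhammer_natDegree]; exact h
        rw [hq', coeff_sub, coeff_smul, hqn, hdn]; simp
    obtain ⟨Q', hQ'deg, hQ'comp⟩ := ih q' hdeg'
    refine ⟨T + Q', ?_, ?_⟩
    · apply (natDegree_add_le _ _).trans
      apply max_le
      · apply (natDegree_smul_le _ _).trans
        rw [descPochhammer_natDegree]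
      · omega
    · rw [add_comp, hTcomp, hQ'comp]
      rw [hq']
      ring

lemma exists_shift (q : ℚ[X]) :
    ∃ Q : ℚ[X], Q.natDegree ≤ q.natDegree + 1 ∧ Q.eval 1 = 0 ∧ Q.comp (X + 1) = Q + q := by
  obtain ⟨Q, hdeg, hcomp⟩ := exists_shift_aux q.natDegree q le_rfl
  refine ⟨Q - C (Q.eval 1), ?_, by simp, ?_⟩
  · apply (natDegree_sub_le _ _).trans
    simp [hdeg]
  · rw [sub_comp, hcomp, C_comp]
    ring

noncomputable def pp : ℕ → ℚ[X]
  | 0 => 1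
  | n + 1 => Classical.choose (exists_shift (X * pp n))

lemma pp_zero : pp 0 = 1 := rfl

lemma pp_succ_deg (n : ℕ) : (pp (n+1)).natDegree ≤ (X * pp n).natDegree + 1 :=
  (Classical.choose_spec (exists_shift (X * pp n))).1

lemma pp_succ_eval_one (n : ℕ) : (pp (n+1)).eval 1 = 0 :=
  (Classical.choose_spec (exists_shift (X * pp n))).2.1

lemma pp_succ_comp (n : ℕ) : (pp (n+1)).comp (X + 1) = pp (n+1) + X * pp n :=
  (Classical.choose_spec (exists_shift (X * pp n))).2.2

lemma pp_deg (n : ℕ) : (pp n).natDegree ≤ 2 * n := by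
  induction n with
  | zero => simp [pp_zero]
  | succ n ih =>
    have := pp_succ_deg n
    have h2 : (X * pp n).natDegree ≤ 1 + 2 * n := by
      apply (natDegree_mul_le).trans
      simp only [natDegree_X]
      omega
    omega

lemma pp_eval_shift (n : ℕ) (x : ℚ) :
    (pp (n+1)).eval (x + 1) = (pp (n+1)).eval x + x * (pp n).eval x := by
  have := congrArg (Polynomial.eval x) (pp_succ_comp n)
  simpa [eval_comp] using this

lemma pp_succ_eval_zero (n : ℕ) : (pp (n+1)).eval 0 = 0 := by
  have := pp_eval_shift n 0
  simp at this
  rw [← this]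
  exact pp_succ_eval_one n

lemma pp_eval_sigma (n : ℕ) : ∀ j : ℕ, 1 ≤ j → (pp n).eval (j : ℚ) = sigmaP n j := by
  induction n with
  | zero => intro j hj; simp [pp_zero, sigmaP_zero]
  | succ n ih =>
    intro j hj
    obtain ⟨m, rfl⟩ : ∃ m, j = m + 1 := ⟨j - 1, by omega⟩
    clear hj
    induction m with
    | zero => simpa [sigmaP_succ_one] using pp_succ_eval_one n
    | succ m ihm =>
      have h1 : ((m + 2 : ℕ) : ℚ) = ((m+1 : ℕ) : ℚ) + 1 := by push_cast; ring
      rw [h1, pp_eval_shift n, ihm, ih (m+1) (by omega), sigmaP_succ_succ]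
      push_cast; ring

lemma sum_comp' {ι : Type*} (s : Finset ι) (f : ι → ℚ[X]) (q : ℚ[X]) :
    (∑ i ∈ s, f i).comp q = ∑ i ∈ s, (f i).comp q := by
  simp [Polynomial.comp, Polynomial.eval₂_finset_sum]

lemma eq_of_eval_nat {P Q : ℚ[X]} (h : ∀ j : ℕ, 1 ≤ j → P.eval (j:ℚ) = Q.eval (j:ℚ)) :
    P = Q := by
  apply Polynomial.eq_of_infinite_eval_eq
  apply Set.infinite_of_injective_forall_mem (f := fun j : ℕ => ((j:ℚ)+1))
  · intro a b hab
    have : ((a:ℚ)) = b := by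
      have := hab; simpa using this
    exact_mod_cast this
  · intro j
    have := h (j+1) (by omega)
    push_cast at this
    simpa using this

lemma const_of_comp {P : ℚ[X]} (h : P.comp (X+1) = P) : P = C (P.eval 1) := by
  have key : ∀ m : ℕ, P.eval ((m:ℚ)+1) = P.eval 1 := by
    intro m
    induction m with
    | zero => simp
    | succ m ihm =>
      have h2 := congrArg (Polynomial.eval ((m:ℚ)+1)) h
      rw [eval_comp] at h2
      simp only [eval_add, eval_X, eval_one] at h2
      push_cast
      rw [h2]
      exact ihm
  apply eq_of_eval_nat
  intro j hj
  obtain ⟨m, rfl⟩ : ∃ m, j = m+1 := ⟨j-1, by omega⟩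
  rw [eval_C]
  push_cast
  exact key m

lemma conv (k : ℕ) :
    ∑ i ∈ range (k+2), (-1:ℚ[X])^(k+1-i) * (pp i * (pp (k+1-i)).comp (1 - X)) = 0 := by
  set N : ℕ → ℚ[X] := fun m => (pp m).comp (-X) with hN
  have hN0 : N 0 = 1 := by simp [hN, pp_zero]
  have hF2 : ∀ m, ((pp m).comp (1 - X)).comp (X+1) = N m := by
    intro m
    rw [comp_assoc]
    congr 1
    rw [sub_comp, one_comp, X_comp]; ring
  have hF3 : ∀ m, (pp (m+1)).comp (1-X) = N (m+1) - X * N m := by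
    intro m
    have h1 := congrArg (fun p : ℚ[X] => p.comp (-X)) (pp_succ_comp m)
    rw [comp_assoc] at h1
    have h2 : ((X:ℚ[X]) + 1).comp (-X) = 1 - X := by rw [add_comp, X_comp, one_comp]; ring
    rw [h2, add_comp, mul_comp, X_comp] at h1
    rw [h1, hN]
    ring
  set B : ℚ[X] := ∑ i ∈ range (k+2), (-1:ℚ[X])^(k+1-i) * (pp i * N (k+1-i)) with hB
  set S : ℚ[X] := ∑ i ∈ range (k+1), (-1:ℚ[X])^(k-i) * (pp i * N (k-i)) with hS
  set Cp : ℚ[X] :=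
    ∑ i ∈ range (k+2), (-1:ℚ[X])^(k+1-i) * (pp i * (pp (k+1-i)).comp (1 - X)) with hC
  -- first: Cp = B + X * S
  have hCeq : Cp = B + X * S := by
    have hs1 : ∑ i ∈ range (k+1), (-1:ℚ[X])^(k+1-i) * (pp i * (pp (k+1-i)).comp (1 - X))
        = ∑ i ∈ range (k+1), ((-1:ℚ[X])^(k+1-i) * (pp i * N (k+1-i))
            + X * ((-1:ℚ[X])^(k-i) * (pp i * N (k-i)))) := by
      apply Finset.sum_congr rfl
      intro i hi
      have hik : i ≤ k := by have := Finset.mem_range.1 hi; omega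
      have h1 : k+1-i = (k-i)+1 := by omega
      rw [h1, hF3 (k-i), pow_succ]
      ring
    rw [hC, Finset.sum_range_succ, hs1]
    have hlast : (-1:ℚ[X])^(k+1-(k+1)) * (pp (k+1) * (pp (k+1-(k+1))).comp (1 - X))
        = pp (k+1) := by
      simp [Nat.sub_self, pp_zero]
    rw [hlast, Finset.sum_add_distrib, ← Finset.mul_sum, ← hS]
    conv_rhs => rw [hB, Finset.sum_range_succ]
    have hlast2 : (-1:ℚ[X])^(k+1-(k+1)) * (pp (k+1) * N (k+1-(k+1))) = pp (k+1) := by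
      simp [Nat.sub_self, hN0]
    rw [hlast2]
    ring
  -- second: Cp.comp (X+1) = B + X * S
  have hCcomp : Cp.comp (X+1) = B + X * S := by
    have hs0 : ∑ i ∈ range (k+2), ((-1:ℚ[X])^(k+1-i) * (pp i * (pp (k+1-i)).comp (1 - X))).comp (X+1)
        = ∑ i ∈ range (k+2), (-1:ℚ[X])^(k+1-i) * ((pp i).comp (X+1) * N (k+1-i)) := by
      apply Finset.sum_congr rfl
      intro i hi
      rw [mul_comp, mul_comp, pow_comp, neg_comp, one_comp, hF2]
    have hs2 : ∑ i ∈ range (k+1), (-1:ℚ[X])^(k+1-(i+1)) * ((pp (i+1)).comp (X+1) * N (k+1-(i+1)))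
        = ∑ i ∈ range (k+1), ((-1:ℚ[X])^(k-i) * (pp (i+1) * N (k-i))
            + X * ((-1:ℚ[X])^(k-i) * (pp i * N (k-i)))) := by
      apply Finset.sum_congr rfl
      intro i hi
      have h1 : k+1-(i+1) = k-i := by omega
      rw [h1, pp_succ_comp i]
      ring
    have hs3 : ∑ i ∈ range (k+1), (-1:ℚ[X])^(k+1-(i+1)) * (pp (i+1) * N (k+1-(i+1)))
        = ∑ i ∈ range (k+1), (-1:ℚ[X])^(k-i) * (pp (i+1) * N (k-i)) := by
      apply Finset.sum_congr rfl
      intro i hi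
      have h1 : k+1-(i+1) = k-i := by omega
      rw [h1]
    rw [hC, sum_comp', hs0]
    conv_lhs => rw [Finset.sum_range_succ']
    rw [hs2]
    have h0 : (-1:ℚ[X])^(k+1-0) * ((pp 0).comp (X + 1) * N (k+1-0))
        = (-1:ℚ[X])^(k+1) * N (k+1) := by
      simp [pp_zero]
    rw [h0, Finset.sum_add_distrib, ← Finset.mul_sum, ← hS]
    conv_rhs => rw [hB, Finset.sum_range_succ']
    rw [hs3]
    have h0' : (-1:ℚ[X])^(k+1-0) * (pp 0 * N (k+1-0)) = (-1:ℚ[X])^(k+1) * N (k+1) := by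
      simp [pp_zero]
    rw [h0']
    ring
  have hper : Cp.comp (X+1) = Cp := by rw [hCcomp, hCeq]
  have hconst := const_of_comp hper
  have hev : Cp.eval 1 = 0 := by
    rw [hC, eval_finset_sum]
    apply Finset.sum_eq_zero
    intro i hi
    simp only [eval_mul, eval_pow, eval_neg, eval_one, eval_comp, eval_sub, eval_X]
    match i with
    | 0 =>
      simp only [Nat.sub_zero, pp_zero, eval_one, one_mul]
      rw [show (1:ℚ) - 1 = 0 by ring, pp_succ_eval_zero k]
      ring
    | (i+1) =>
      rw [pp_succ_eval_one i]
      ring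
  rw [hconst, hev, map_zero]

noncomputable def rr (n : ℕ) : ℚ[X] := (-1:ℚ[X])^n * (pp n).comp (1 - X)

lemma rr_deg (n : ℕ) : (rr n).natDegree ≤ 2 * n := by
  apply (natDegree_mul_le).trans
  have h1 : ((-1:ℚ[X])^n).natDegree = 0 := by
    have : ((-1:ℚ[X])^n) = C ((-1:ℚ)^n) := by
      rw [map_pow, map_neg, map_one]
    rw [this, natDegree_C]
  rw [h1, natDegree_comp]
  have h2 : ((1:ℚ[X]) - X).natDegree = 1 := by
    have : ((1:ℚ[X]) - X) = -(X - C 1) := by rw [C_1]; ring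
    rw [this, natDegree_neg, natDegree_X_sub_C]
  rw [h2, mul_one]
  simpa using pp_deg n

lemma rr_eval : ∀ n : ℕ, ∀ j : ℕ, 1 ≤ j → (rr n).eval (j:ℚ) = QP j n := by
  intro n
  induction n using Nat.strong_induction_on with
  | _ n ih =>
    match n with
    | 0 =>
      intro j hj
      simp [rr, pp_zero, QP]
    | (k+1) =>
      intro j hj
      have h0 := congrArg (Polynomial.eval (j:ℚ)) (conv k)
      rw [eval_finset_sum, eval_zero] at h0
      have hterm : ∀ i ∈ range (k+2),
          Polynomial.eval (j:ℚ) ((-1:ℚ[X])^(k+1-i) * (pp i * (pp (k+1-i)).comp (1 - X)))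
          = sigmaP i j * (rr (k+1-i)).eval (j:ℚ) := by
        intro i hi
        rw [rr, eval_mul, eval_mul, pp_eval_sigma i j hj, eval_mul]
        ring
      rw [Finset.sum_congr rfl hterm] at h0
      rw [Finset.sum_range_succ'] at h0
      have hz : sigmaP 0 j * (rr (k+1-0)).eval (j:ℚ) = (rr (k+1)).eval (j:ℚ) := by
        rw [sigmaP_zero, one_mul, Nat.sub_zero]
      rw [hz] at h0
      have hsum : ∑ i ∈ range (k+1), sigmaP (i+1) j * (rr (k+1-(i+1))).eval (j:ℚ)
          = ∑ i ∈ range (k+1), sigmaP (i+1) j * QP j (k-i) := by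
        apply Finset.sum_congr rfl
        intro i hi
        have h1 : k+1-(i+1) = k-i := by omega
        rw [h1, ih (k-i) (by omega) j hj]
      rw [hsum] at h0
      have hQ : QP j (k+1) = -∑ i ∈ range (k+1), sigmaP (i+1) j * QP j (k-i) := by
        rw [QP]
        congr 1
        exact Fin.sum_univ_eq_sum_range (fun i => sigmaP (i+1) j * QP j (k-i)) (k+1)
      rw [hQ]
      linarith [h0]

theorem stmt9 (n : ℕ) :
    (∃! pr : Polynomial ℚ × Polynomial ℚ,
        pr.1.natDegree ≤ 2 * n ∧ pr.2.natDegree ≤ 2 * n ∧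
        ∀ j : ℕ, 1 ≤ j → pr.1.eval (j : ℚ) = sigmaP n j ∧ pr.2.eval (j : ℚ) = QP j n) ∧
    (∀ pr : Polynomial ℚ × Polynomial ℚ,
        (pr.1.natDegree ≤ 2 * n ∧ pr.2.natDegree ≤ 2 * n ∧
          ∀ j : ℕ, 1 ≤ j → pr.1.eval (j : ℚ) = sigmaP n j ∧ pr.2.eval (j : ℚ) = QP j n) →
        pr.2.comp (1 - Polynomial.X) = (-1) ^ n * pr.1) := by
  have huniq : ∀ pr : Polynomial ℚ × Polynomial ℚ,
      (pr.1.natDegree ≤ 2 * n ∧ pr.2.natDegree ≤ 2 * n ∧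
        ∀ j : ℕ, 1 ≤ j → pr.1.eval (j : ℚ) = sigmaP n j ∧ pr.2.eval (j : ℚ) = QP j n) →
      pr = (pp n, rr n) := by
    intro pr ⟨h1, h2, h3⟩
    have e1 : pr.1 = pp n := by
      apply eq_of_eval_nat
      intro j hj
      rw [(h3 j hj).1, pp_eval_sigma n j hj]
    have e2 : pr.2 = rr n := by
      apply eq_of_eval_nat
      intro j hj
      rw [(h3 j hj).2, rr_eval n j hj]
    exact Prod.ext e1 e2
  constructor
  · refine ⟨(pp n, rr n), ⟨pp_deg n, rr_deg n, fun j hj => ⟨pp_eval_sigma n j hj, rr_eval n j hj⟩⟩,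
      fun pr hpr => huniq pr hpr⟩
  · intro pr hpr
    rw [huniq pr hpr]
    show (rr n).comp (1 - X) = (-1)^n * pp n
    rw [rr, mul_comp, pow_comp, neg_comp, one_comp, comp_assoc]
    have : ((1:ℚ[X]) - X).comp (1 - X) = X := by
      rw [sub_comp, one_comp, X_comp]; ring
    rw [this, comp_X]
end
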